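/- arXiv:1908.08125 — 7 statements merged into one kernel-verified Lean document; each statement's English description precedes it below -/
import Mathlib

section
/- Let G be a group and (G_i)_{i∈I} a family of subgroups of G. Then the following are equivalent: (i) the subgroups (G_i)_{i∈I} are free in G, i.e. for all k ∈ ℕ, all i(1), …, i(k) ∈ I with i(1) ≠ i(2), i(2) ≠ i(3), …, i(k−1) ≠ i(k), and all g_1, …, g_k with g_j ∈ G_{i(j)} and g_j ≠ e for j = 1, …, k, one has g_1 ⋯ g_k ≠ e; (ii) the unital subalgebras (ℂG_i)_{i∈I} are freely independent in the non-commutative probability space (ℂG, τ_G). -/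
open scoped BigOperators

/-- A family of unital subalgebras `(S i)_{i ∈ I}` of a unital complex algebra is *freely
independent* with respect to a unital linear functional `φ`: `φ (a₁ ⋯ a_k) = 0` whenever
neighbouring factors come from different subalgebras and all factors are centered. -/
def FreeFamily {A : Type*} [Ring A] [Algebra ℂ A] {I : Type*}
    (φ : A →ₗ[ℂ] ℂ) (S : I → Subalgebra ℂ A) : Prop :=
  ∀ (k : ℕ) (i : Fin (k + 1) → I) (a : Fin (k + 1) → A),
    (∀ j : Fin k, i j.castSucc ≠ i j.succ) →
    (∀ j, a j ∈ S (i j)) →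
    (∀ j, φ (a j) = 0) →
    φ (List.ofFn a).prod = 0

/-- The functional `τ_G` on the group algebra `ℂG`, reading off the coefficient of the
neutral element. -/
noncomputable def tauG (G : Type*) [Group G] : MonoidAlgebra ℂ G →ₗ[ℂ] ℂ :=
  Finsupp.lapply (1 : G) ∘ₗ (MonoidAlgebra.coeffLinearEquiv ℂ).toLinearMap

/-- The unital subalgebra `ℂ G_i` of `ℂ G` corresponding to a subgroup `H ≤ G`. -/
noncomputable def groupSubalgebra (G : Type*) [Group G] (H : Subgroup G) :
    Subalgebra ℂ (MonoidAlgebra ℂ G) :=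
  Algebra.adjoin ℂ (MonoidAlgebra.of ℂ G '' (H : Set G))

section Aux

variable {G : Type*} [Group G] {I' : Type*}

lemma support_subset_of_mem_adjoin {H : Subgroup G} {a : MonoidAlgebra ℂ G}
    (ha : a ∈ Algebra.adjoin ℂ (MonoidAlgebra.of ℂ G '' (H : Set G))) :
    ↑a.coeff.support ⊆ (H : Set G) := by
  classical
  induction ha using Algebra.adjoin_induction with
  | mem x hx =>
      obtain ⟨g, hg, rfl⟩ := hx
      intro g' hg'
      simp only [MonoidAlgebra.of_apply, MonoidAlgebra.coeff_single, Finset.mem_coe,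
        Finsupp.support_single_ne_zero _ (one_ne_zero), Finset.mem_singleton] at hg'
      subst hg'; exact hg
  | algebraMap c =>
      intro g hg
      simp only [Finset.mem_coe] at hg
      have h1 : (algebraMap ℂ (MonoidAlgebra ℂ G) c).coeff = Finsupp.single 1 c := rfl
      rw [h1] at hg
      have := Finsupp.support_single_subset hg
      simp only [Finset.mem_singleton] at this
      subst this; exact H.one_mem
  | add x y _ _ hx hy =>
      intro g hg
      simp only [Finset.mem_coe] at hg
      rw [MonoidAlgebra.coeff_add] at hg
      rcases Finset.mem_union.mp (Finsupp.support_add hg) with h | h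
      · exact hx h
      · exact hy h
  | mul x y _ _ hx hy =>
      intro g hg
      simp only [Finset.mem_coe] at hg
      have := MonoidAlgebra.support_coeff_mul_subset x y hg
      rw [Finset.mem_mul] at this
      obtain ⟨u, hu, v, hv, rfl⟩ := this
      exact H.mul_mem (hx hu) (hy hv)

lemma prod_support_claim (Gi : I' → Subgroup G) :
    ∀ (k : ℕ) (i : Fin (k+1) → I') (a : Fin (k+1) → MonoidAlgebra ℂ G),
    (∀ j, ↑(a j).coeff.support ⊆ ((Gi (i j) : Set G) \ {1})) →
    ↑((List.ofFn a).prod).coeff.support ⊆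
      {x : G | ∃ g : Fin (k+1) → G, (∀ j, g j ∈ Gi (i j)) ∧ (∀ j, g j ≠ 1) ∧
        x = (List.ofFn g).prod} := by
  intro k
  induction k with
  | zero =>
      intro i a ha
      intro x hx
      have hx' : x ∈ (a 0).coeff.support := by
        simpa [List.ofFn_succ] using hx
      have := ha 0 hx'
      exact ⟨fun _ => x, fun j => by rw [Fin.fin_one_eq_zero j]; exact this.1,
        fun j => by rw [Fin.fin_one_eq_zero j]; exact this.2, by simp [List.ofFn_succ]⟩
  | succ k ih =>
      intro i a ha
      intro x hx
      classical
      rw [List.ofFn_succ, List.prod_cons] at hx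
      simp only [Finset.mem_coe] at hx
      have hx2 := MonoidAlgebra.support_coeff_mul_subset (a 0) ((List.ofFn (a ∘ Fin.succ)).prod) hx
      rw [Finset.mem_mul] at hx2
      obtain ⟨u, hu, v, hv, rfl⟩ := hx2
      have hu' := ha 0 hu
      have hv' := ih (i ∘ Fin.succ) (a ∘ Fin.succ) (fun j => ha j.succ) hv
      obtain ⟨g', hg1, hg2, rfl⟩ := hv'
      refine ⟨Fin.cons u g', ?_, ?_, ?_⟩
      · intro j
        refine Fin.cases ?_ ?_ j
        · simpa using hu'.1
        · intro j'; simpa using hg1 j'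
      · intro j
        refine Fin.cases ?_ ?_ j
        · simpa using hu'.2
        · intro j'; simpa using hg2 j'
      · rw [List.ofFn_succ, List.prod_cons]
        simp [Fin.cons_succ, Function.comp]

end Aux

/-- Subgroups `(G_i)_{i ∈ I}` of a group `G` are free in the group-theoretical sense if and
only if the unital subalgebras `(ℂ G_i)_{i ∈ I}` are freely independent in the
non-commutative probability space `(ℂ G, τ_G)`. -/
theorem subgroups_free_iff_group_subalgebras_free
    {G : Type*} [Group G] {I : Type*} (Gi : I → Subgroup G) :
    (∀ (k : ℕ) (i : Fin (k + 1) → I) (g : Fin (k + 1) → G),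
        (∀ j : Fin k, i j.castSucc ≠ i j.succ) →
        (∀ j, g j ∈ Gi (i j)) →
        (∀ j, g j ≠ 1) →
        (List.ofFn g).prod ≠ 1)
      ↔ FreeFamily (tauG G) (fun i => groupSubalgebra G (Gi i)) := by
  constructor
  · intro hfree k i a halt hmem htau
    have hsupp : ∀ j, ↑(a j).coeff.support ⊆ ((Gi (i j) : Set G) \ {1}) := by
      intro j
      have h1 := support_subset_of_mem_adjoin (hmem j)
      intro g hg
      refine ⟨h1 hg, ?_⟩
      intro hge
      rw [Set.mem_singleton_iff] at hge
      subst hge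
      have h2 : (a j).coeff 1 = 0 := htau j
      exact (Finsupp.mem_support_iff.mp hg) h2
    have hclaim := prod_support_claim Gi k i a hsupp
    show ((List.ofFn a).prod).coeff 1 = 0
    rw [← Finsupp.notMem_support_iff]
    intro hcontra
    obtain ⟨g, hg1, hg2, hg3⟩ := hclaim hcontra
    exact hfree k i g halt hg1 hg2 hg3.symm
  · intro hfree k i g halt hg hne hcontra
    have hmem : ∀ j, MonoidAlgebra.of ℂ G (g j) ∈ groupSubalgebra G (Gi (i j)) :=
      fun j => Algebra.subset_adjoin ⟨g j, hg j, rfl⟩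
    have htau : ∀ j, tauG G (MonoidAlgebra.of ℂ G (g j)) = 0 := by
      intro j
      show (Finsupp.single (g j) (1 : ℂ)) 1 = 0
      exact Finsupp.single_eq_of_ne' (hne j)
    have h0 := hfree k i (fun j => MonoidAlgebra.of ℂ G (g j)) halt hmem htau
    have hprod : (List.ofFn fun j => MonoidAlgebra.of ℂ G (g j)).prod
        = MonoidAlgebra.of ℂ G ((List.ofFn g).prod) := by
      rw [map_list_prod, List.map_ofFn]
      rfl
    rw [hprod, hcontra] at h0
    have : ((Finsupp.single (1 : G) (1 : ℂ))) 1 = 0 := h0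
    simp at this
end

section
/- Let (𝒜, φ) be a non-commutative probability space with free cumulants (κ_n)_{n∈ℕ}. Let n ≥ 2 and a_1, …, a_n ∈ 𝒜. If a_i = 1 for at least one i ∈ {1, …, n}, then κ_n(a_1, …, a_n) = 0. -/
open scoped BigOperators

/-- Two points lie in the same block of a partition of `{1, …, n}`. -/
def SameBlock {n : ℕ} (π : Finpartition (Finset.univ : Finset (Fin n))) (p q : Fin n) : Prop :=
  ∃ B ∈ π.parts, p ∈ B ∧ q ∈ B

/-- A partition of `{1, …, n}` is non-crossing if there are no `p₁ < q₁ < p₂ < q₂` with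
`p₁ ∼ p₂`, `q₁ ∼ q₂` and `p₁ ≁ q₁`. -/
def IsNonCrossing {n : ℕ} (π : Finpartition (Finset.univ : Finset (Fin n))) : Prop :=
  ¬ ∃ p₁ q₁ p₂ q₂ : Fin n, p₁ < q₁ ∧ q₁ < p₂ ∧ p₂ < q₂ ∧
      SameBlock π p₁ p₂ ∧ SameBlock π q₁ q₂ ∧ ¬ SameBlock π p₁ q₁

/-- `μ` is the Möbius function of the poset `NC(n)` of non-crossing partitions, ordered
by reversed refinement: `μ(π, π) = 1` and for `π < σ` one has
`∑_{τ ∈ NC(n), π ≤ τ ≤ σ} μ(π, τ) = 0` (equivalently, `μ(π,σ) = -∑_{π ≤ τ < σ} μ(π,τ)`). -/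
def IsMoebiusNC (n : ℕ)
    (μ : Finpartition (Finset.univ : Finset (Fin n)) →
         Finpartition (Finset.univ : Finset (Fin n)) → ℂ) : Prop :=
  (∀ π, IsNonCrossing π → μ π π = 1) ∧
  (∀ π σ, IsNonCrossing π → IsNonCrossing σ → π ≤ σ → π ≠ σ →
    ∑ᶠ τ ∈ {τ : Finpartition (Finset.univ : Finset (Fin n)) |
        IsNonCrossing τ ∧ π ≤ τ ∧ τ ≤ σ}, μ π τ = 0)

/-- The factorized moment `φ_π(a₁, …, a_n) = ∏_{V ∈ π} φ(a_{i₁} ⋯ a_{i_s})`, where the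
elements of each block are multiplied in increasing order. -/
noncomputable def phiPart {A : Type*} [Ring A] [Algebra ℂ A] (φ : A →ₗ[ℂ] ℂ)
    {n : ℕ} (π : Finpartition (Finset.univ : Finset (Fin n))) (a : Fin n → A) : ℂ :=
  ∏ B ∈ π.parts, φ ((B.sort (· ≤ ·)).map a).prod

/-- The free cumulant `κ_n(a₁, …, a_n) = ∑_{π ∈ NC(n)} φ_π(a₁, …, a_n) μ(π, 1_n)`, with
`μ` the Möbius function of `NC(n)` and `1_n = ⊤` the partition with one block. -/
noncomputable def freeCumulant {A : Type*} [Ring A] [Algebra ℂ A] (φ : A →ₗ[ℂ] ℂ)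
    {n : ℕ}
    (μ : Finpartition (Finset.univ : Finset (Fin n)) →
         Finpartition (Finset.univ : Finset (Fin n)) → ℂ)
    (a : Fin n → A) : ℂ :=
  ∑ᶠ π ∈ {π : Finpartition (Finset.univ : Finset (Fin n)) | IsNonCrossing π},
    phiPart φ π a * μ π ⊤

section Aux

open scoped Classical
open Finset

abbrev FPn (n : ℕ) := Finpartition (Finset.univ : Finset (Fin n))
abbrev FQn (n : ℕ) (i : Fin n) := Finpartition ((Finset.univ : Finset (Fin n)) \ {i})

variable {n : ℕ}

lemma sameBlock_top (p q : Fin n) : SameBlock (⊤ : FPn n) p q := by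
  obtain ⟨B, hB, hpB⟩ := (⊤ : FPn n).exists_mem (Finset.mem_univ p)
  have hBu : B = Finset.univ := Finset.mem_singleton.1 (Finpartition.parts_top_subset _ hB)
  exact ⟨B, hB, hpB, hBu ▸ Finset.mem_univ q⟩

lemma isNonCrossing_top : IsNonCrossing (⊤ : FPn n) := by
  rintro ⟨p₁, q₁, p₂, q₂, -, -, -, -, -, h⟩
  exact h (sameBlock_top _ _)

noncomputable def extOne (i : Fin n) (σ : FQn n i) : FPn n :=
  σ.extend (by simp) Finset.sdiff_disjoint
    (by rw [Finset.sup_eq_union, Finset.sdiff_union_of_subset (Finset.subset_univ _)])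

lemma extOne_parts (i : Fin n) (σ : FQn n i) :
    (extOne i σ).parts = insert {i} σ.parts := Finpartition.extend_parts _ _ _ _

lemma singleton_mem_extOne (i : Fin n) (σ : FQn n i) :
    ({i} : Finset (Fin n)) ∈ (extOne i σ).parts := by
  rw [extOne_parts]; exact mem_insert_self _ _

lemma mem_of_mem_part_avoid {i : Fin n} {π : FPn n} {B : Finset (Fin n)}
    (hB : B ∈ (π.avoid {i}).parts) : ∃ d ∈ π.parts, B = d \ {i} := by
  rw [Finpartition.mem_avoid] at hB
  obtain ⟨d, hd, -, rfl⟩ := hB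
  exact ⟨d, hd, rfl⟩

lemma sameBlock_extOne_ne {i : Fin n} {σ : FQn n i} {p q : Fin n}
    (h : SameBlock (extOne i σ) p q) (hpq : p ≠ q) : p ≠ i ∧ q ≠ i := by
  obtain ⟨B, hB, hp, hq⟩ := h
  rw [extOne_parts, mem_insert] at hB
  rcases hB with rfl | hB
  · rw [mem_singleton] at hp hq
    exact absurd (hp.trans hq.symm) hpq
  · have hsub := σ.le hB
    have hp' := hsub hp
    have hq' := hsub hq
    rw [mem_sdiff, mem_singleton] at hp' hq'
    exact ⟨hp'.2, hq'.2⟩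

lemma sameBlock_of_extOne_avoid {i : Fin n} {π : FPn n} {p q : Fin n} (hp : p ≠ i)
    (h : SameBlock (extOne i (π.avoid {i})) p q) : SameBlock π p q := by
  obtain ⟨B, hB, hpB, hqB⟩ := h
  rw [extOne_parts, mem_insert] at hB
  rcases hB with rfl | hB
  · exact absurd (mem_singleton.1 hpB) hp
  · obtain ⟨d, hd, rfl⟩ := mem_of_mem_part_avoid hB
    rw [mem_sdiff] at hpB hqB
    exact ⟨d, hd, hpB.1, hqB.1⟩

lemma sameBlock_extOne_avoid {i : Fin n} {π : FPn n} {p q : Fin n} (hp : p ≠ i) (hq : q ≠ i)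
    (h : SameBlock π p q) : SameBlock (extOne i (π.avoid {i})) p q := by
  obtain ⟨B, hB, hpB, hqB⟩ := h
  refine ⟨B \ {i}, ?_, ?_, ?_⟩
  · rw [extOne_parts, mem_insert]
    right
    rw [Finpartition.mem_avoid]
    exact ⟨B, hB, fun hsub => hp (mem_singleton.1 (hsub hpB)), rfl⟩
  · rw [mem_sdiff, mem_singleton]; exact ⟨hpB, hp⟩
  · rw [mem_sdiff, mem_singleton]; exact ⟨hqB, hq⟩

lemma isNonCrossing_extOne_avoid {i : Fin n} {π : FPn n} (hπ : IsNonCrossing π) :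
    IsNonCrossing (extOne i (π.avoid {i})) := by
  rintro ⟨p₁, q₁, p₂, q₂, h12, h23, h34, hpp, hqq, hnot⟩
  obtain ⟨hp₁, hp₂⟩ := sameBlock_extOne_ne hpp (h12.trans h23).ne
  obtain ⟨hq₁, hq₂⟩ := sameBlock_extOne_ne hqq (h23.trans h34).ne
  exact hπ ⟨p₁, q₁, p₂, q₂, h12, h23, h34, sameBlock_of_extOne_avoid hp₁ hpp,
    sameBlock_of_extOne_avoid hq₁ hqq,
    fun hs => hnot (sameBlock_extOne_avoid hp₁ hq₁ hs)⟩

lemma extOne_ne_top (hn : 2 ≤ n) (i : Fin n) (σ : FQn n i) : extOne i σ ≠ ⊤ := by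
  intro h
  have h1 : ({i} : Finset (Fin n)) ∈ (⊤ : FPn n).parts := h ▸ singleton_mem_extOne i σ
  have h2 : ({i} : Finset (Fin n)) = Finset.univ :=
    Finset.mem_singleton.1 (Finpartition.parts_top_subset _ h1)
  obtain ⟨j, hj⟩ := Fintype.exists_ne_of_one_lt_card (by simp only [Fintype.card_fin]; omega) i
  exact hj (mem_singleton.1 (h2 ▸ Finset.mem_univ j))

lemma extOne_le_iff {i : Fin n} {σ : FQn n i} {π : FPn n} :
    extOne i σ ≤ π ↔ σ ≤ π.avoid {i} := by
  constructor
  · intro h C hC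
    obtain ⟨B, hB, hCB⟩ :=
      h (show C ∈ (extOne i σ).parts by rw [extOne_parts]; exact mem_insert_of_mem hC)
    replace hCB : C ⊆ B := hCB
    obtain ⟨p, hp⟩ := Finset.nonempty_iff_ne_empty.2 (σ.ne_bot hC)
    have hpC := σ.le hC hp
    rw [mem_sdiff, mem_singleton] at hpC
    refine ⟨B \ {i}, ?_, ?_⟩
    · rw [Finpartition.mem_avoid]
      refine ⟨B, hB, fun hsub => hpC.2 (mem_singleton.1 (hsub (hCB hp))), rfl⟩
    · intro x hx
      have hxC := σ.le hC hx
      rw [mem_sdiff, mem_singleton] at hxC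
      rw [mem_sdiff, mem_singleton]
      exact ⟨hCB hx, hxC.2⟩
  · intro h B hB
    rw [extOne_parts, mem_insert] at hB
    rcases hB with rfl | hB
    · obtain ⟨B, hB, hiB⟩ := π.exists_mem (Finset.mem_univ i)
      exact ⟨B, hB, by simpa using hiB⟩
    · obtain ⟨c, hc, hBc⟩ := h hB
      obtain ⟨d, hd, rfl⟩ := mem_of_mem_part_avoid hc
      exact ⟨d, hd, le_trans hBc (Finset.sdiff_subset)⟩

set_option maxHeartbeats 1000000 in
lemma sum_mu_top_eq_zero {μ : FPn n → FPn n → ℂ} (hμ : IsMoebiusNC n μ)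
    {ρ : FPn n} (hρ : IsNonCrossing ρ) (hρt : ρ ≠ ⊤) :
    ∑ π ∈ Finset.univ.filter (fun π : FPn n => IsNonCrossing π ∧ ρ ≤ π), μ π ⊤ = 0 := by
  classical
  haveI Fi : Fintype {π : FPn n // IsNonCrossing π} := Fintype.ofFinite _
  let T := {π : FPn n // IsNonCrossing π}
  let M : Matrix T T ℂ := fun x y => if x.1 ≤ y.1 then μ x.1 y.1 else 0
  let Z : Matrix T T ℂ := fun x y => if x.1 ≤ y.1 then 1 else 0
  have key : ∀ f : FPn n → ℂ, (∑ y : T, f y.1)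
      = ∑ π ∈ Finset.univ.filter (fun π : FPn n => IsNonCrossing π), f π := by
    intro f
    exact (Finset.sum_subtype (F := Fi) _ (by intro x; simp) f).symm
  have hMZ : M * Z = 1 := by
    ext x z
    rw [Matrix.mul_apply, Matrix.one_apply]
    by_cases hxz : x = z
    · subst hxz
      rw [if_pos rfl, Finset.sum_eq_single x]
      · simp only [M, Z, if_pos (le_refl x.1)]
        rw [mul_one]
        exact hμ.1 x.1 x.2
      · intro y _ hyx
        simp only [M, Z]
        split_ifs with h1 h2
        · exact absurd (Subtype.ext (le_antisymm h2 h1)) hyx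
        all_goals simp
      · intro h; exact absurd (Finset.mem_univ x) h
    · rw [if_neg hxz]
      by_cases hle : x.1 ≤ z.1
      · have h2 := hμ.2 x.1 z.1 x.2 z.2 hle (fun h => hxz (Subtype.ext h))
        have hset : {τ : FPn n | IsNonCrossing τ ∧ x.1 ≤ τ ∧ τ ≤ z.1}
            = ↑(Finset.univ.filter (fun τ : FPn n => IsNonCrossing τ ∧ x.1 ≤ τ ∧ τ ≤ z.1)) := by
          ext τ; simp
        rw [hset, finsum_mem_coe_finset] at h2
        have e1 : ∀ y : T, M x y * Z y z
            = (fun π : FPn n => if x.1 ≤ π ∧ π ≤ z.1 then μ x.1 π else 0) y.1 := by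
          intro y
          simp only [M, Z]
          by_cases h1 : x.1 ≤ y.1 <;> by_cases h2 : y.1 ≤ z.1 <;>
            simp [h1, h2]
        rw [Finset.sum_congr rfl fun y _ => e1 y,
          key (fun π : FPn n => if x.1 ≤ π ∧ π ≤ z.1 then μ x.1 π else 0)]
        rw [← Finset.sum_filter, Finset.filter_filter]
        convert h2 using 2
      · apply Finset.sum_eq_zero
        intro y _
        simp only [M, Z]
        split_ifs with h1 h2
        · exact absurd (h1.trans h2) hle
        all_goals simp
  have hZM : Z * M = 1 := mul_eq_one_comm.mp hMZ
  have htop : IsNonCrossing (⊤ : FPn n) := isNonCrossing_top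
  have h := congrFun (congrFun hZM ⟨ρ, hρ⟩) ⟨⊤, htop⟩
  rw [Matrix.one_apply, if_neg (fun hh : (⟨ρ, hρ⟩ : T) = ⟨⊤, htop⟩ =>
    hρt (congrArg Subtype.val hh)), Matrix.mul_apply] at h
  have e2 : ∀ y : T, Z ⟨ρ, hρ⟩ y * M y ⟨⊤, htop⟩
      = (fun π : FPn n => if ρ ≤ π then μ π ⊤ else 0) y.1 := by
    intro y
    simp only [M, Z]
    rw [if_pos (le_top : y.1 ≤ ⊤)]
    by_cases h1 : ρ ≤ y.1 <;> simp [h1]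
  rw [Finset.sum_congr rfl fun y _ => e2 y,
    key (fun π : FPn n => if ρ ≤ π then μ π ⊤ else 0),
    ← Finset.sum_filter, Finset.filter_filter] at h
  convert h using 2

noncomputable def fiberSum (μ : FPn n → FPn n → ℂ) (i : Fin n) (σ : FQn n i) : ℂ :=
  ∑ π ∈ Finset.univ.filter
    (fun π : FPn n => IsNonCrossing π ∧ π.avoid {i} = σ), μ π ⊤

set_option maxHeartbeats 1000000 in
lemma fiberSum_eq_zero {μ : FPn n → FPn n → ℂ} (hμ : IsMoebiusNC n μ) (hn : 2 ≤ n)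
    (i : Fin n) (σ : FQn n i) : fiberSum μ i σ = 0 := by
  classical
  suffices H : ∀ k : ℕ, ∀ σ : FQn n i,
      (Finset.univ.filter (fun τ : FQn n i => σ < τ)).card ≤ k → fiberSum μ i σ = 0 by
    exact H _ σ le_rfl
  intro k
  induction k using Nat.strong_induction_on with
  | _ k ih =>
    intro σ hk
    by_cases hNC : IsNonCrossing (extOne i σ)
    · have hsum : ∑ τ ∈ Finset.univ.filter (fun τ : FQn n i => σ ≤ τ), fiberSum μ i τ
          = ∑ π ∈ Finset.univ.filter
              (fun π : FPn n => IsNonCrossing π ∧ σ ≤ π.avoid {i}), μ π ⊤ := by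
        rw [← Finset.sum_fiberwise_of_maps_to
          (g := fun π : FPn n => π.avoid {i})
          (s := Finset.univ.filter (fun π : FPn n => IsNonCrossing π ∧ σ ≤ π.avoid {i}))
          (t := Finset.univ.filter (fun τ : FQn n i => σ ≤ τ))
          (by intro π hπ
              rw [Finset.mem_filter] at hπ ⊢
              exact ⟨Finset.mem_univ _, hπ.2.2⟩)
          (fun π => μ π ⊤)]
        apply Finset.sum_congr rfl
        intro τ hτ
        rw [Finset.mem_filter] at hτ
        unfold fiberSum
        apply Finset.sum_congr
        · ext π
          simp only [Finset.mem_filter, Finset.mem_univ, true_and]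
          constructor
          · rintro ⟨h1, h3⟩; exact ⟨⟨h1, h3 ▸ hτ.2⟩, h3⟩
          · rintro ⟨⟨h1, -⟩, h3⟩; exact ⟨h1, h3⟩
        · intros; rfl
      have hcond : ∀ π : FPn n, (IsNonCrossing π ∧ σ ≤ π.avoid {i})
          ↔ (IsNonCrossing π ∧ extOne i σ ≤ π) := by
        intro π
        rw [extOne_le_iff]
      have hzero : ∑ τ ∈ Finset.univ.filter (fun τ : FQn n i => σ ≤ τ), fiberSum μ i τ = 0 := by
        rw [hsum]
        have := sum_mu_top_eq_zero hμ hNC (extOne_ne_top hn i σ)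
        rw [Finset.filter_congr (fun π _ => hcond π)]
        convert this using 2
      have hins : Finset.univ.filter (fun τ : FQn n i => σ ≤ τ)
          = insert σ (Finset.univ.filter (fun τ : FQn n i => σ < τ)) := by
        ext τ
        simp only [Finset.mem_filter, Finset.mem_univ, true_and, Finset.mem_insert]
        rw [le_iff_lt_or_eq]
        constructor
        · rintro (h | h)
          · exact Or.inr h
          · exact Or.inl h.symm
        · rintro (h | h)
          · exact Or.inr h.symm
          · exact Or.inl h
      rw [hins, Finset.sum_insert (by simp)] at hzero
      have hrest : ∑ τ ∈ Finset.univ.filter (fun τ : FQn n i => σ < τ), fiberSum μ i τ = 0 := by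
        apply Finset.sum_eq_zero
        intro τ hτ
        rw [Finset.mem_filter] at hτ
        have hlt : (Finset.univ.filter (fun ρ : FQn n i => τ < ρ)).card
            < (Finset.univ.filter (fun ρ : FQn n i => σ < ρ)).card := by
          apply Finset.card_lt_card
          constructor
          · intro ρ hρ
            rw [Finset.mem_filter] at hρ ⊢
            exact ⟨Finset.mem_univ _, hτ.2.trans hρ.2⟩
          · intro hsub
            have : τ ∈ Finset.univ.filter (fun ρ : FQn n i => τ < ρ) :=
              hsub (by rw [Finset.mem_filter]; exact ⟨Finset.mem_univ _, hτ.2⟩)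
            rw [Finset.mem_filter] at this
            exact lt_irrefl τ this.2
        exact ih _ (lt_of_lt_of_le hlt hk) τ le_rfl
      rw [hrest] at hzero
      simpa using hzero
    · unfold fiberSum
      apply Finset.sum_eq_zero
      intro π hπ
      rw [Finset.mem_filter] at hπ
      exact absurd (hπ.2.2 ▸ isNonCrossing_extOne_avoid hπ.2.1) hNC

lemma sort_erase (B : Finset (Fin n)) (i : Fin n) :
    (B.erase i).sort (· ≤ ·) = (B.sort (· ≤ ·)).erase i := by
  have hp : List.Perm ((B.erase i).sort (· ≤ ·)) ((B.sort (· ≤ ·)).erase i) := by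
    rw [← Multiset.coe_eq_coe, ← Multiset.coe_erase, Finset.sort_eq, Finset.sort_eq,
      Finset.erase_val]
  exact List.Perm.eq_of_pairwise' (Finset.pairwise_sort _ _)
    (List.Pairwise.sublist (List.erase_sublist (a := i) (l := B.sort (· ≤ ·))) (Finset.pairwise_sort _ _)) hp

lemma prod_map_sort_erase {A : Type*} [Monoid A] (a : Fin n → A) {i : Fin n} (hi : a i = 1)
    {B : Finset (Fin n)} (hiB : i ∈ B) :
    ((B.sort (· ≤ ·)).map a).prod = (((B.erase i).sort (· ≤ ·)).map a).prod := by
  rw [sort_erase]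
  obtain ⟨s, t, hst⟩ := List.append_of_mem (Finset.mem_sort (· ≤ ·) |>.2 hiB)
  have hnd : (B.sort (· ≤ ·)).Nodup := Finset.sort_nodup _ _
  rw [hst] at hnd ⊢
  have his : i ∉ s := fun h => (List.disjoint_of_nodup_append hnd) h (List.mem_cons_self (a := i) (l := t))
  rw [List.erase_append_right _ his, List.erase_cons_head]
  simp [hi]

lemma phiPart_eq {A : Type*} [Ring A] [Algebra ℂ A] (φ : A →ₗ[ℂ] ℂ) (hφ1 : φ 1 = 1)
    (a : Fin n → A) (i : Fin n) (hi : a i = 1) (π : FPn n) :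
    phiPart φ π a = ∏ C ∈ (π.avoid {i}).parts, φ ((C.sort (· ≤ ·)).map a).prod := by
  classical
  set f : Finset (Fin n) → ℂ := fun C => φ ((C.sort (· ≤ ·)).map a).prod with hf
  have hfempty : f ⊥ = 1 := by
    simp only [hf]
    rw [show ((⊥ : Finset (Fin n)) : Finset (Fin n)) = (∅ : Finset (Fin n)) from rfl]
    rw [Finset.sort_empty]
    simpa using hφ1
  have havoid : (π.avoid ({i} : Finset (Fin n))).parts
      = (π.parts.image (· \ {i})).erase ⊥ := by
    simp [Finpartition.avoid, Finpartition.ofErase]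
  show ∏ B ∈ π.parts, f B = ∏ C ∈ (π.avoid {i}).parts, f C
  rw [havoid, Finset.prod_erase _ hfempty]
  have hinj : ∀ B ∈ π.parts, ∀ B' ∈ π.parts, B \ {i} = B' \ {i} → B = B' := by
    intro B hB B' hB' h
    by_contra hne
    have hd : Disjoint B B' := π.disjoint hB hB' hne
    rcases (B \ {i}).eq_empty_or_nonempty with he | ⟨x, hx⟩
    · have he' : B' \ {i} = (∅ : Finset (Fin n)) := h ▸ he
      have hB1 : B = {i} :=
        (Finset.Nonempty.subset_singleton_iff
          (Finset.nonempty_iff_ne_empty.2 (π.ne_bot hB))).1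
          (Finset.sdiff_eq_empty_iff_subset.1 he)
      have hB2 : B' = {i} :=
        (Finset.Nonempty.subset_singleton_iff
          (Finset.nonempty_iff_ne_empty.2 (π.ne_bot hB'))).1
          (Finset.sdiff_eq_empty_iff_subset.1 he')
      exact hne (hB1.trans hB2.symm)
    · have hx' : x ∈ B' \ {i} := h ▸ hx
      rw [Finset.mem_sdiff] at hx hx'
      exact Finset.disjoint_left.1 hd hx.1 hx'.1
  rw [Finset.prod_image hinj]
  apply Finset.prod_congr rfl
  intro B hB
  by_cases hiB : i ∈ B
  · rw [← Finset.erase_eq]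
    simp only [hf]
    rw [prod_map_sort_erase a hi hiB]
  · rw [Finset.sdiff_eq_self_of_disjoint (by simpa using hiB)]

end Aux

open scoped Classical in
/-- Free cumulants of order `n ≥ 2` vanish as soon as one of the arguments is the unit:
if `a_i = 1` for some `i`, then `κ_n(a₁, …, a_n) = 0`. -/
theorem freeCumulant_eq_zero_of_one_mem
    {A : Type*} [Ring A] [Algebra ℂ A]
    (φ : A →ₗ[ℂ] ℂ) (hφ1 : φ 1 = 1)
    {n : ℕ} (hn : 2 ≤ n)
    (μ : Finpartition (Finset.univ : Finset (Fin n)) →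
         Finpartition (Finset.univ : Finset (Fin n)) → ℂ)
    (hμ : IsMoebiusNC n μ)
    (a : Fin n → A) (i : Fin n) (hi : a i = 1) :
    freeCumulant φ μ a = 0 := by
  classical
  unfold freeCumulant
  have hset : {π : FPn n | IsNonCrossing π}
      = ↑(Finset.univ.filter (fun π : FPn n => IsNonCrossing π)) := by ext π; simp
  rw [hset, finsum_mem_coe_finset]
  rw [← Finset.sum_fiberwise_of_maps_to (g := fun π : FPn n => π.avoid {i})
      (t := (Finset.univ : Finset (FQn n i))) (fun _ _ => Finset.mem_univ _)
      (fun π => phiPart φ π a * μ π ⊤)]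
  apply Finset.sum_eq_zero
  intro σ _
  have hconst : ∀ π ∈ (Finset.univ.filter (fun π : FPn n => IsNonCrossing π)).filter
      (fun π => π.avoid {i} = σ), phiPart φ π a * μ π ⊤
        = (∏ C ∈ σ.parts, φ ((C.sort (· ≤ ·)).map a).prod) * μ π ⊤ := by
    intro π hπ
    rw [Finset.mem_filter] at hπ
    rw [phiPart_eq φ hφ1 a i hi π, hπ.2]
  rw [Finset.sum_congr rfl hconst, ← Finset.mul_sum]
  have hF : ∑ π ∈ (Finset.univ.filter (fun π : FPn n => IsNonCrossing π)).filter
      (fun π => π.avoid {i} = σ), μ π ⊤ = 0 := by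
    have hz := fiberSum_eq_zero hμ hn i σ
    unfold fiberSum at hz
    rw [Finset.filter_filter]
    convert hz using 2
  rw [hF, mul_zero]
end

section
/- For each n ∈ ℕ, the partially ordered set NC(n) of non-crossing partitions of {1, …, n}, ordered by reversed refinement, is a lattice: any two π, σ ∈ NC(n) have a greatest lower bound π ∧ σ and a least upper bound π ∨ σ in NC(n). Moreover, the meet is given blockwise by intersection: for all p, q ∈ {1, …, n}, p ∼_{π∧σ} q if and only if p ∼_π q and p ∼_σ q. -/
open scoped BigOperators

namespace NCAux

variable {n : ℕ}

lemma sameBlock_iff (π : Finpartition (Finset.univ : Finset (Fin n))) (p q : Fin n) :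
    SameBlock π p q ↔ q ∈ π.part p := by
  constructor
  · rintro ⟨B, hB, hp, hq⟩
    rwa [π.part_eq_of_mem hB hp]
  · intro h
    exact ⟨π.part p, π.part_mem.2 (Finset.mem_univ p), π.mem_part (Finset.mem_univ p), h⟩

lemma sameBlock_refl (π : Finpartition (Finset.univ : Finset (Fin n))) (p : Fin n) :
    SameBlock π p p :=
  (sameBlock_iff π p p).2 (π.mem_part (Finset.mem_univ p))

lemma sameBlock_symm {π : Finpartition (Finset.univ : Finset (Fin n))} {p q : Fin n}
    (h : SameBlock π p q) : SameBlock π q p := by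
  obtain ⟨B, hB, hp, hq⟩ := h
  exact ⟨B, hB, hq, hp⟩

lemma sameBlock_trans {π : Finpartition (Finset.univ : Finset (Fin n))} {p q r : Fin n}
    (h : SameBlock π p q) (h' : SameBlock π q r) : SameBlock π p r := by
  obtain ⟨B, hB, hp, hq⟩ := h
  obtain ⟨C, hC, hq', hr⟩ := h'
  exact ⟨B, hB, hp, (π.eq_of_mem_parts hC hB hq' hq) ▸ hr⟩

lemma le_iff {π σ : Finpartition (Finset.univ : Finset (Fin n))} :
    π ≤ σ ↔ ∀ p q : Fin n, SameBlock π p q → SameBlock σ p q := by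
  constructor
  · rintro h p q ⟨B, hB, hp, hq⟩
    obtain ⟨C, hC, hBC⟩ := h hB
    exact ⟨C, hC, hBC hp, hBC hq⟩
  · intro h B hB
    obtain ⟨p, hp⟩ := π.nonempty_of_mem_parts hB
    refine ⟨σ.part p, σ.part_mem.2 (Finset.mem_univ p), fun q hq => ?_⟩
    exact (sameBlock_iff σ p q).1 (h p q ⟨B, hB, hp, hq⟩)

lemma isNonCrossing_of_imp {π σ : Finpartition (Finset.univ : Finset (Fin n))}
    (hσ : IsNonCrossing σ)
    (h : ∀ p q, SameBlock π p q → SameBlock σ p q)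
    (h' : ∀ p q, ¬ SameBlock π p q → ¬ SameBlock σ p q) : IsNonCrossing π := by
  rintro ⟨p₁, q₁, p₂, q₂, h1, h2, h3, h4, h5, h6⟩
  exact hσ ⟨p₁, q₁, p₂, q₂, h1, h2, h3, h p₁ p₂ h4, h q₁ q₂ h5, h' p₁ q₁ h6⟩

open Classical in
/-- The finpartition associated to an intersection-type equivalence relation. -/
noncomputable def mk (r : Fin n → Fin n → Prop) (hr : Equivalence r) :
    Finpartition (Finset.univ : Finset (Fin n)) :=
  Finpartition.ofSetoid ⟨r, hr⟩

open Classical in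
lemma sameBlock_mk {r : Fin n → Fin n → Prop} {hr : Equivalence r} (p q : Fin n) :
    SameBlock (mk r hr) p q ↔ r p q := by
  rw [sameBlock_iff, mk, Finpartition.mem_part_ofSetoid_iff_rel]; exact Iff.rfl

end NCAux

open NCAux in
/-- `NC(n)`, ordered by reversed refinement, is a lattice: any two non-crossing
partitions `π, σ` have a greatest lower bound and a least upper bound among the
non-crossing partitions; moreover the meet is given blockwise by intersection:
`p ∼_{π∧σ} q ↔ p ∼_π q ∧ p ∼_σ q`. -/
theorem noncrossing_partitions_lattice {n : ℕ}
    (π σ : Finpartition (Finset.univ : Finset (Fin n)))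
    (hπ : IsNonCrossing π) (hσ : IsNonCrossing σ) :
    (∃ τ : Finpartition (Finset.univ : Finset (Fin n)), IsNonCrossing τ ∧
        τ ≤ π ∧ τ ≤ σ ∧
        (∀ ρ : Finpartition (Finset.univ : Finset (Fin n)),
          IsNonCrossing ρ → ρ ≤ π → ρ ≤ σ → ρ ≤ τ) ∧
        (∀ p q : Fin n, SameBlock τ p q ↔ SameBlock π p q ∧ SameBlock σ p q)) ∧
    (∃ τ : Finpartition (Finset.univ : Finset (Fin n)), IsNonCrossing τ ∧
        π ≤ τ ∧ σ ≤ τ ∧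
        (∀ ρ : Finpartition (Finset.univ : Finset (Fin n)),
          IsNonCrossing ρ → π ≤ ρ → σ ≤ ρ → τ ≤ ρ)) := by
  constructor
  · -- meet
    have hrequiv : Equivalence (fun p q : Fin n => SameBlock π p q ∧ SameBlock σ p q) :=
      ⟨fun p => ⟨sameBlock_refl π p, sameBlock_refl σ p⟩,
       fun h => ⟨sameBlock_symm h.1, sameBlock_symm h.2⟩,
       fun h h' => ⟨sameBlock_trans h.1 h'.1, sameBlock_trans h.2 h'.2⟩⟩
    refine ⟨mk _ hrequiv, ?_, ?_, ?_, ?_, fun p q => sameBlock_mk p q⟩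
    · rintro ⟨p₁, q₁, p₂, q₂, h1, h2, h3, h4, h5, h6⟩
      rw [sameBlock_mk] at h4 h5 h6
      rcases not_and_or.1 h6 with h6' | h6'
      · exact hπ ⟨p₁, q₁, p₂, q₂, h1, h2, h3, h4.1, h5.1, h6'⟩
      · exact hσ ⟨p₁, q₁, p₂, q₂, h1, h2, h3, h4.2, h5.2, h6'⟩
    · exact le_iff.2 fun p q h => ((sameBlock_mk p q).1 h).1
    · exact le_iff.2 fun p q h => ((sameBlock_mk p q).1 h).2
    · intro ρ _ h1 h2
      exact le_iff.2 fun p q h =>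
        (sameBlock_mk p q).2 ⟨le_iff.1 h1 p q h, le_iff.1 h2 p q h⟩
  · -- join
    have hrequiv : Equivalence (fun p q : Fin n =>
        ∀ ρ : Finpartition (Finset.univ : Finset (Fin n)),
          IsNonCrossing ρ → π ≤ ρ → σ ≤ ρ → SameBlock ρ p q) :=
      ⟨fun p ρ _ _ _ => sameBlock_refl ρ p,
       fun h ρ h1 h2 h3 => sameBlock_symm (h ρ h1 h2 h3),
       fun h h' ρ h1 h2 h3 => sameBlock_trans (h ρ h1 h2 h3) (h' ρ h1 h2 h3)⟩
    refine ⟨mk _ hrequiv, ?_, ?_, ?_, ?_⟩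
    · rintro ⟨p₁, q₁, p₂, q₂, h1, h2, h3, h4, h5, h6⟩
      rw [sameBlock_mk] at h4 h5 h6
      push_neg at h6
      obtain ⟨ρ, hρ, hπρ, hσρ, hnot⟩ := h6
      exact hρ ⟨p₁, q₁, p₂, q₂, h1, h2, h3, h4 ρ hρ hπρ hσρ, h5 ρ hρ hπρ hσρ, hnot⟩
    · exact le_iff.2 fun p q h => (sameBlock_mk p q).2
        fun ρ _ h2 _ => le_iff.1 h2 p q h
    · exact le_iff.2 fun p q h => (sameBlock_mk p q).2
        fun ρ _ _ h3 => le_iff.1 h3 p q h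
    · intro ρ h1 h2 h3
      exact le_iff.2 fun p q h => ((sameBlock_mk p q).1 h) ρ h1 h2 h3
end

section
/- For every n ∈ ℕ, the Möbius function of the lattice NC(n) of non-crossing partitions satisfies μ(0_n, 1_n) = (−1)^{n−1} C_{n−1}, where C_{n−1} = (1/n)·binom(2(n−1), n−1) is the (n−1)-st Catalan number. -/
open Finset Polynomial
open scoped BigOperators

noncomputable def cw (m : ℕ) : ℂ := (-1)^(m-1) * (catalan (m-1) : ℂ)

noncomputable def aa : ℕ → ℂ := fun k => if k = 0 then 0 else cw k

lemma aa_zero : aa 0 = 0 := rfl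

lemma aa_succ (k : ℕ) : aa (k+1) = (-1)^k * (catalan k : ℂ) := by simp [aa, cw]

lemma aa_one : aa 1 = 1 := by simp [aa_succ]

lemma aa_conv {m : ℕ} (hm : 2 ≤ m) :
    ∑ ij ∈ Finset.HasAntidiagonal.antidiagonal m, aa ij.1 * aa ij.2 = -aa m := by
  obtain ⟨p, rfl⟩ : ∃ p, m = p + 2 := ⟨m - 2, by omega⟩
  rw [Finset.Nat.sum_antidiagonal_eq_sum_range_succ (fun x y => aa x * aa y)]
  rw [Finset.sum_range_succ']
  rw [Finset.sum_range_succ]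
  have h1 : aa 0 = 0 := rfl
  simp only [h1, mul_zero, zero_mul, Nat.sub_self, add_zero, Nat.sub_zero]
  have h2 : ∀ i ∈ Finset.range (p+1), aa (i+1) * aa (p + 2 - (i+1)) =
      (-1)^p * ((catalan i : ℂ) * (catalan (p - i) : ℂ)) := by
    intro i hi
    rw [Finset.mem_range] at hi
    have : p + 2 - (i + 1) = (p - i) + 1 := by omega
    rw [this, aa_succ, aa_succ]
    have : (-1 : ℂ)^i * (catalan i : ℂ) * ((-1)^(p-i) * (catalan (p-i) : ℂ))
        = ((-1)^i * (-1)^(p-i)) * ((catalan i : ℂ) * (catalan (p-i) : ℂ)) := by ring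
    rw [this, ← pow_add]
    congr 2
    omega
  rw [Finset.sum_congr rfl h2, ← Finset.mul_sum]
  have h3 : ∑ i ∈ Finset.range (p+1), (catalan i : ℂ) * (catalan (p - i) : ℂ)
      = (catalan (p+1) : ℂ) := by
    rw [catalan_succ' p]
    rw [Finset.Nat.sum_antidiagonal_eq_sum_range_succ (fun x y => catalan x * catalan y)]
    push_cast
    rfl
  rw [h3, aa_succ]
  ring

noncomputable def PP (M : ℕ) : Polynomial ℂ := ∑ k ∈ range (M+1), C (aa k) * X ^ k

lemma coeff_PP (M i : ℕ) : (PP M).coeff i = if i ≤ M then aa i else 0 := by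
  rw [PP, finset_sum_coeff]
  simp only [coeff_C_mul, coeff_X_pow, mul_ite, mul_one, mul_zero]
  rw [Finset.sum_ite_eq (Finset.range (M+1)) i aa]
  simp [Nat.lt_succ_iff]

lemma key1 (M : ℕ) : ∀ i ≤ M, ((PP M)^2 + PP M - X).coeff i = 0 := by
  intro i hi
  rw [coeff_sub, coeff_add, pow_two, coeff_mul]
  have hc : ∀ ij ∈ Finset.HasAntidiagonal.antidiagonal i, (PP M).coeff ij.1 * (PP M).coeff ij.2
      = aa ij.1 * aa ij.2 := by
    intro ij hij
    rw [Finset.HasAntidiagonal.mem_antidiagonal] at hij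
    rw [coeff_PP, coeff_PP, if_pos (by omega), if_pos (by omega)]
  rw [Finset.sum_congr rfl hc, coeff_PP, if_pos hi, coeff_X]
  match i, hi with
  | 0, _ => simp [aa_zero]
  | 1, _ => simp [aa_zero, aa_one, Finset.Nat.antidiagonal_succ]
  | (n+2), _ =>
    rw [aa_conv (by omega)]
    simp

noncomputable def QQ (M : ℕ) : Polynomial ℂ := (PP M).comp (X + X^2)

lemma key3 (M : ℕ) : ∀ m ≤ M, ((QQ M)^2 + QQ M).coeff m = (X + X^2 : Polynomial ℂ).coeff m := by
  intro m hm
  obtain ⟨S, hS⟩ := ((X_pow_dvd_iff (n := M+1)).mpr (fun d hd => key1 M d (by omega)))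
  have hcomp : (QQ M)^2 + QQ M - (X + X^2) = ((PP M)^2 + PP M - X).comp (X + X^2) := by
    simp [QQ, sub_comp, add_comp, pow_comp, X_comp]
  rw [hS] at hcomp
  have hX : (X + X^2 : Polynomial ℂ) = X * (1 + X) := by ring
  have h0 : (((QQ M)^2 + QQ M - (X + X^2))).coeff m = 0 := by
    rw [hcomp, mul_comp, pow_comp, X_comp, hX, mul_pow, mul_assoc, coeff_X_pow_mul']
    rw [if_neg (by omega)]
  have := coeff_sub ((QQ M)^2 + QQ M) (X + X^2) m
  rw [h0] at this
  exact eq_of_sub_eq_zero this.symm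

lemma coeff_QQ (M m : ℕ) : (QQ M).coeff m
    = ∑ k ∈ range (M+1), aa k * (if k ≤ m then (k.choose (m-k) : ℂ) else 0) := by
  have hq : ∀ k : ℕ, ((X + X^2 : Polynomial ℂ)^k).coeff m
      = if k ≤ m then (k.choose (m-k) : ℂ) else 0 := by
    intro k
    have hX : (X + X^2 : Polynomial ℂ) = X * (1 + X) := by ring
    rw [hX, mul_pow, coeff_X_pow_mul', coeff_one_add_X_pow]
  rw [QQ, PP, comp, eval₂_finset_sum, finset_sum_coeff]
  refine Finset.sum_congr rfl fun k _ => ?_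
  rw [eval₂_mul, eval₂_C, eval₂_X_pow, coeff_C_mul, hq]

lemma qq0 (M : ℕ) : (QQ M).coeff 0 = 0 := by
  rw [coeff_QQ]
  refine Finset.sum_eq_zero fun k _ => ?_
  rcases Nat.eq_zero_or_pos k with rfl | hk
  · simp [aa_zero]
  · rw [if_neg (by omega), mul_zero]

lemma qq1 (M : ℕ) (hM : 1 ≤ M) : (QQ M).coeff 1 = 1 := by
  rw [coeff_QQ]
  rw [Finset.sum_eq_single 1]
  · simp [aa_one]
  · intro k hk hne
    rcases Nat.eq_zero_or_pos k with rfl | hkp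
    · simp [aa_zero]
    · rw [if_neg (by omega), mul_zero]
  · intro h
    exact absurd (Finset.mem_range.mpr (by omega)) h

lemma qq_zero (M : ℕ) : ∀ m, 2 ≤ m → m ≤ M → (QQ M).coeff m = 0 := by
  intro m
  induction m using Nat.strong_induction_on with
  | _ m IH =>
    intro h2 hM
    have h3 := key3 M m hM
    rw [coeff_add, pow_two, coeff_mul] at h3
    rcases eq_or_lt_of_le h2 with h2' | h3'
    · -- m = 2
      subst h2'
      have hant : Finset.HasAntidiagonal.antidiagonal 2 = {((0:ℕ),(2:ℕ)),(1,1),(2,0)} := by decide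
      rw [hant] at h3
      rw [Finset.sum_insert (by decide), Finset.sum_insert (by decide),
        Finset.sum_singleton] at h3
      rw [qq0, qq1 M (by omega)] at h3
      have hrhs : (X + X^2 : Polynomial ℂ).coeff 2 = 1 := by
        rw [coeff_add, coeff_X, coeff_X_pow]
        norm_num
      rw [hrhs] at h3
      simp only [zero_mul, mul_zero, one_mul, zero_add, add_zero] at h3
      linear_combination h3
    · -- m ≥ 3
      have hsum : ∑ ij ∈ Finset.HasAntidiagonal.antidiagonal m, (QQ M).coeff ij.1 * (QQ M).coeff ij.2 = 0 := by
        refine Finset.sum_eq_zero fun ij hij => ?_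
        rw [Finset.HasAntidiagonal.mem_antidiagonal] at hij
        rcases Nat.eq_zero_or_pos ij.1 with h1 | hp1
        · rw [h1, qq0, zero_mul]
        rcases Nat.eq_zero_or_pos ij.2 with h1 | hp2
        · rw [h1, qq0, mul_zero]
        rcases eq_or_ne ij.1 1 with h1 | hne1
        · have : 2 ≤ ij.2 ∧ ij.2 < m := by omega
          rw [IH ij.2 this.2 this.1 (by omega), mul_zero]
        · have : 2 ≤ ij.1 ∧ ij.1 < m := by omega
          rw [IH ij.1 this.2 this.1 (by omega), zero_mul]
      rw [hsum, zero_add] at h3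
      rw [h3, coeff_add, coeff_X, coeff_X_pow, if_neg (by omega), if_neg (by omega), add_zero]
  
theorem key_sum (m : ℕ) (hm : 2 ≤ m) :
    ∑ k ∈ range (m+1), cw k * (k.choose (m-k) : ℂ) = 0 := by
  have h1 : ∑ k ∈ range (m+1), cw k * (k.choose (m-k) : ℂ)
      = ∑ k ∈ range (m+1), aa k * (if k ≤ m then (k.choose (m-k) : ℂ) else 0) := by
    refine Finset.sum_congr rfl fun k hk => ?_
    rw [Finset.mem_range] at hk
    rw [if_pos (by omega)]
    rcases Nat.eq_zero_or_pos k with rfl | hkp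
    · rw [Nat.choose_eq_zero_of_lt (by omega)]
      simp [aa_zero]
    · simp only [aa]
      rw [if_neg (by omega : ¬ k = 0)]
  rw [h1, ← coeff_QQ m m, qq_zero m m hm le_rfl]



section Count
variable {α : Type*} [LinearOrder α] [DecidableEq α]

/-- Every pair of non-`B` elements of `s` is separated by an element of `B`
(i.e. all "gaps" of `B` in `s` have at most one element). -/
def spread (s B : Finset α) : Prop :=
  ∀ x ∈ s \ B, ∀ y ∈ s \ B, x < y → ∃ b ∈ B, x < b ∧ b < y

lemma spread_erase_min_iff {s B : Finset α} (hs : s.Nonempty) (hm : s.min' hs ∈ B) :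
    spread s B ↔ spread (s.erase (s.min' hs)) (B.erase (s.min' hs)) := by
  set m₀ := s.min' hs with hm₀
  have hsd : (s.erase m₀) \ (B.erase m₀) = s \ B := by
    ext z
    simp only [Finset.mem_sdiff, Finset.mem_erase]
    constructor
    · rintro ⟨⟨hzm, hzs⟩, h3⟩
      exact ⟨hzs, fun hB => h3 ⟨hzm, hB⟩⟩
    · rintro ⟨hzs, hzB⟩
      exact ⟨⟨fun h => hzB (h ▸ hm), hzs⟩, fun h => hzB h.2⟩
  constructor
  · intro spr x hx y hy hxy
    rw [hsd] at hx hy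
    obtain ⟨b, hbB, h1, h2⟩ := spr x hx y hy hxy
    have hxs : x ∈ s := (Finset.mem_sdiff.mp hx).1
    have hle : m₀ ≤ x := Finset.min'_le s x hxs
    exact ⟨b, Finset.mem_erase.mpr ⟨ne_of_gt (lt_of_le_of_lt hle h1), hbB⟩, h1, h2⟩
  · intro spr x hx y hy hxy
    rw [← hsd] at hx hy
    obtain ⟨b, hbB, h1, h2⟩ := spr x hx y hy hxy
    exact ⟨b, (Finset.mem_erase.mp hbB).2, h1, h2⟩

lemma min_erase_mem_of_spread {s B : Finset α} (hs : s.Nonempty) (hB : B ⊆ s)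
    (h1 : s.min' hs ∉ B) (hne : (s.erase (s.min' hs)).Nonempty) (hspr : spread s B) :
    (s.erase (s.min' hs)).min' hne ∈ B := by
  set m₁ := s.min' hs
  set m₂ := (s.erase m₁).min' hne
  by_contra hm₂
  have hm₂e : m₂ ∈ s.erase m₁ := Finset.min'_mem _ _
  have hm₂s : m₂ ∈ s := Finset.mem_of_mem_erase hm₂e
  have h12 : m₁ < m₂ := Finset.min'_lt_of_mem_erase_min' s hs hm₂e
  have hx : m₁ ∈ s \ B := Finset.mem_sdiff.mpr ⟨Finset.min'_mem s hs, h1⟩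
  have hy : m₂ ∈ s \ B := Finset.mem_sdiff.mpr ⟨hm₂s, hm₂⟩
  obtain ⟨b, hbB, hb1, hb2⟩ := hspr m₁ hx m₂ hy h12
  have hbe : b ∈ s.erase m₁ := Finset.mem_erase.mpr ⟨ne_of_gt hb1, hB hbB⟩
  have hle : m₂ ≤ b := Finset.min'_le _ b hbe
  exact absurd hb2 (not_lt.mpr hle)

lemma spread_erase_min_iff' {s B : Finset α} (hs : s.Nonempty)
    (hB : B ⊆ s.erase (s.min' hs)) (hne : (s.erase (s.min' hs)).Nonempty)
    (hm : (s.erase (s.min' hs)).min' hne ∈ B) :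
    spread s B ↔ spread (s.erase (s.min' hs)) B := by
  set m₁ := s.min' hs with hm₁
  set s' := s.erase m₁ with hs'
  set m₂ := s'.min' hne with hm₂
  have hm₁B : m₁ ∉ B := fun h => (Finset.mem_erase.mp (hB h)).1 rfl
  have hsd : s \ B = insert m₁ (s' \ B) := by
    ext z
    simp only [Finset.mem_sdiff, Finset.mem_insert, Finset.mem_erase, hs']
    constructor
    · rintro ⟨hzs, hzB⟩
      rcases eq_or_ne z m₁ with rfl | hne'
      · exact Or.inl rfl
      · exact Or.inr ⟨⟨hne', hzs⟩, hzB⟩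
    · rintro (rfl | ⟨⟨hne', hzs⟩, hzB⟩)
      · exact ⟨Finset.min'_mem s hs, hm₁B⟩
      · exact ⟨hzs, hzB⟩
  constructor
  · intro spr x hx y hy hxy
    have hx' : x ∈ s \ B := by rw [hsd]; exact Finset.mem_insert_of_mem hx
    have hy' : y ∈ s \ B := by rw [hsd]; exact Finset.mem_insert_of_mem hy
    exact spr x hx' y hy' hxy
  · intro spr x hx y hy hxy
    rw [hsd, Finset.mem_insert] at hx hy
    rcases hy with rfl | hy
    · -- y = m₁, so x < m₁ with x ∈ s \ B ⊆ ... contradiction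
      exfalso
      rcases hx with rfl | hx
      · exact lt_irrefl _ hxy
      · have hxs' : x ∈ s' := (Finset.mem_sdiff.mp hx).1
        have hlt : m₁ < x := Finset.min'_lt_of_mem_erase_min' s hs hxs'
        exact absurd hxy (not_lt.mpr hlt.le)
    rcases hx with rfl | hx
    · -- x = m₁ : use b := m₂
      refine ⟨m₂, hm, ?_, ?_⟩
      · exact Finset.min'_lt_of_mem_erase_min' s hs (hB hm)
      · have hys' : y ∈ s' := (Finset.mem_sdiff.mp hy).1
        have h1 : m₂ ≤ y := Finset.min'_le _ y hys'
        have h2 : y ≠ m₂ := fun h => (Finset.mem_sdiff.mp hy).2 (h ▸ hm)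
        exact lt_of_le_of_ne h1 (Ne.symm h2)
    · exact spr x hx y hy hxy

open scoped Classical in
theorem count_spread (k : ℕ) (hk : 1 ≤ k) :
    ∀ (s : Finset α) (hs : s.Nonempty), k ≤ s.card →
    ((s.powerset).filter (fun B => s.min' hs ∈ B ∧ spread s B ∧ B.card = k)).card
      = k.choose (s.card - k) := by
  induction k, hk using Nat.le_induction with
  | base =>
    intro s hs hcard
    set m₀ := s.min' hs with hm₀
    have hBiff : ∀ B, (B ∈ s.powerset ∧ m₀ ∈ B ∧ spread s B ∧ B.card = 1) ↔
        (B = {m₀} ∧ spread s {m₀}) := by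
      intro B
      constructor
      · rintro ⟨hpow, hmem, hspr, hcard1⟩
        obtain ⟨a, ha⟩ := Finset.card_eq_one.mp hcard1
        subst ha
        have : m₀ = a := Finset.mem_singleton.mp hmem
        subst this
        exact ⟨rfl, hspr⟩
      · rintro ⟨rfl, hspr⟩
        exact ⟨Finset.mem_powerset.mpr (Finset.singleton_subset_iff.mpr (Finset.min'_mem s hs)),
          Finset.mem_singleton_self _, hspr, Finset.card_singleton _⟩
    by_cases h2 : s.card ≤ 2
    · have hspr : spread s {m₀} := by
        intro x hx y hy hxy
        exfalso
        have hxe : x ∈ s.erase m₀ := by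
          rw [Finset.mem_sdiff, Finset.mem_singleton] at hx
          exact Finset.mem_erase.mpr ⟨hx.2, hx.1⟩
        have hye : y ∈ s.erase m₀ := by
          rw [Finset.mem_sdiff, Finset.mem_singleton] at hy
          exact Finset.mem_erase.mpr ⟨hy.2, hy.1⟩
        have hlt : 1 < (s.erase m₀).card :=
          Finset.one_lt_card.mpr ⟨x, hxe, y, hye, ne_of_lt hxy⟩
        have hm₀mem : m₀ ∈ s := Finset.min'_mem s hs
        have hce : (s.erase m₀).card = s.card - 1 := Finset.card_erase_of_mem hm₀mem
        omega
      have : (s.powerset).filter (fun B => m₀ ∈ B ∧ spread s B ∧ B.card = 1) = {{m₀}} := by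
        ext B
        rw [Finset.mem_filter, Finset.mem_singleton]
        constructor
        · rintro ⟨h1, h2⟩
          exact ((hBiff B).mp ⟨h1, h2.1, h2.2.1, h2.2.2⟩).1
        · rintro rfl
          have h := (hBiff {m₀}).mpr ⟨rfl, hspr⟩
          exact ⟨h.1, h.2.1, h.2.2.1, h.2.2.2⟩
      rw [this, Finset.card_singleton]
      have : s.card = 1 ∨ s.card = 2 := by omega
      rcases this with h | h <;> simp [h]
    · have : (s.powerset).filter (fun B => m₀ ∈ B ∧ spread s B ∧ B.card = 1) = ∅ := by
        rw [Finset.filter_eq_empty_iff]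
        intro B hB
        rw [Finset.mem_powerset] at hB
        rintro ⟨hmem, hspr, hcard1⟩
        have hBeq : B = {m₀} ∧ spread s {m₀} :=
          (hBiff B).mp ⟨Finset.mem_powerset.mpr hB, hmem, hspr, hcard1⟩
        obtain ⟨rfl, hspr'⟩ := hBeq
        have hm₀mem : m₀ ∈ s := Finset.min'_mem s hs
        have hlt : 1 < (s.erase m₀).card := by
          have hce : (s.erase m₀).card = s.card - 1 := Finset.card_erase_of_mem hm₀mem
          omega
        obtain ⟨x, hxe, y, hye, hxy⟩ := Finset.one_lt_card.mp hlt
        have key : ∀ u v : α, u ∈ s.erase m₀ → v ∈ s.erase m₀ → u < v → False := by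
          intro u v hu hv huv
          have hu' : u ∈ s \ {m₀} := by
            rw [Finset.mem_sdiff, Finset.mem_singleton]
            exact ⟨Finset.mem_of_mem_erase hu, (Finset.mem_erase.mp hu).1⟩
          have hv' : v ∈ s \ {m₀} := by
            rw [Finset.mem_sdiff, Finset.mem_singleton]
            exact ⟨Finset.mem_of_mem_erase hv, (Finset.mem_erase.mp hv).1⟩
          obtain ⟨b, hbB, hb1, hb2⟩ := hspr' u hu' v hv' huv
          rw [Finset.mem_singleton] at hbB
          have h5 : m₀ < u := Finset.min'_lt_of_mem_erase_min' s hs hu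
          rw [hbB] at hb1
          exact absurd hb1 (not_lt.mpr h5.le)
        rcases lt_or_gt_of_ne hxy with h | h
        · exact key x y hxe hye h
        · exact key y x hye hxe h
      rw [this, Finset.card_empty]
      rw [Nat.choose_eq_zero_of_lt (by omega)]
  | succ k hk IH =>
    intro s hs hcard
    set m₀ := s.min' hs with hm₀
    have hm₀s : m₀ ∈ s := Finset.min'_mem s hs
    set s₁ := s.erase m₀ with hs₁def
    have hcard1 : s₁.card = s.card - 1 := Finset.card_erase_of_mem hm₀s
    have hs₁ : s₁.Nonempty := Finset.card_pos.mp (by omega)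
    set m₁ := s₁.min' hs₁ with hm₁
    have hm₁s₁ : m₁ ∈ s₁ := Finset.min'_mem _ _
    have hm₀₁ : m₀ < m₁ := Finset.min'_lt_of_mem_erase_min' s hs hm₁s₁
    set A := (s.powerset).filter (fun B => m₀ ∈ B ∧ spread s B ∧ B.card = k + 1) with hA
    have hsplit := Finset.card_filter_add_card_filter_not
      (s := A) (p := fun B => m₁ ∈ B)
    -- Claim 1
    have hclaim1 : (A.filter (fun B => m₁ ∈ B)).card = k.choose (s₁.card - k) := by
      rw [← IH s₁ hs₁ (by omega)]
      apply Finset.card_bij' (fun B _ => B.erase m₀)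
        (fun B' _ => insert m₀ B')
      · intro B hB
        simp only [hA, Finset.mem_filter] at hB
        exact Finset.insert_erase hB.1.2.1
      · intro B' hB'
        simp only [Finset.mem_filter, Finset.mem_powerset] at hB'
        have hm₀B' : m₀ ∉ B' := fun h => (Finset.mem_erase.mp (hB'.1 h)).1 rfl
        exact Finset.erase_insert hm₀B'
      · -- forward membership
        intro B hB
        simp only [hA, Finset.mem_filter, Finset.mem_powerset] at hB ⊢
        obtain ⟨⟨hBs, hm₀B, hspr, hcardB⟩, hm₁B⟩ := hB
        refine ⟨Finset.erase_subset_erase m₀ hBs, ?_, ?_, ?_⟩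
        · exact Finset.mem_erase.mpr ⟨ne_of_gt hm₀₁, hm₁B⟩
        · exact (spread_erase_min_iff hs hm₀B).mp hspr
        · rw [Finset.card_erase_of_mem hm₀B, hcardB]; omega
      · -- backward membership
        intro B' hB'
        simp only [hA, Finset.mem_filter, Finset.mem_powerset] at hB' ⊢
        obtain ⟨hBs, hm₁B, hspr, hcardB⟩ := hB'
        have hm₀B' : m₀ ∉ B' := fun h => (Finset.mem_erase.mp (hBs h)).1 rfl
        refine ⟨⟨?_, Finset.mem_insert_self _ _, ?_, ?_⟩, Finset.mem_insert_of_mem hm₁B⟩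
        · intro z hz
          rcases Finset.mem_insert.mp hz with rfl | hz
          · exact hm₀s
          · exact Finset.mem_of_mem_erase (hBs hz)
        · have := (spread_erase_min_iff hs (B := insert m₀ B')
            (Finset.mem_insert_self _ _))
          rw [Finset.erase_insert hm₀B'] at this
          exact this.mpr hspr
        · rw [Finset.card_insert_of_notMem hm₀B', hcardB]
    by_cases hfull : s.card = k + 1
    · -- second part empty
      have hempty : (A.filter (fun B => ¬ m₁ ∈ B)) = ∅ := by
        rw [Finset.filter_eq_empty_iff]
        intro B hB
        simp only [hA, Finset.mem_filter, Finset.mem_powerset] at hB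
        obtain ⟨hBs, _, _, hcardB⟩ := hB
        have : B = s := Finset.eq_of_subset_of_card_le hBs (by omega)
        subst this
        simp [Finset.mem_of_mem_erase hm₁s₁]
      rw [hempty] at hsplit
      rw [Finset.card_empty, add_zero] at hsplit
      rw [← hsplit, hclaim1, hfull]
      have h1 : k + 1 - (k+1) = 0 := by omega
      have h2 : s₁.card - k = 0 := by omega
      rw [h1, h2, Nat.choose_zero_right, Nat.choose_zero_right]
    · -- k + 1 < s.card
      have hlt : k + 1 < s.card := lt_of_le_of_ne hcard (fun h => hfull h.symm)
      set s₂ := s₁.erase m₁ with hs₂def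
      have hcard2 : s₂.card = s.card - 2 := by
        rw [hs₂def, Finset.card_erase_of_mem hm₁s₁]; omega
      have hs₂ : s₂.Nonempty := Finset.card_pos.mp (by omega)
      set m₂ := s₂.min' hs₂ with hm₂
      have hm₂s₂ : m₂ ∈ s₂ := Finset.min'_mem _ _
      have hm₁₂ : m₁ < m₂ := Finset.min'_lt_of_mem_erase_min' s₁ hs₁ hm₂s₂
      have hclaim2 : (A.filter (fun B => ¬ m₁ ∈ B)).card = k.choose (s₂.card - k) := by
        rw [← IH s₂ hs₂ (by omega)]
        apply Finset.card_bij' (fun B _ => B.erase m₀) (fun B' _ => insert m₀ B')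
        · intro B hB
          simp only [hA, Finset.mem_filter] at hB
          exact Finset.insert_erase hB.1.2.1
        · intro B' hB'
          simp only [Finset.mem_filter, Finset.mem_powerset] at hB'
          have hB's₁ : B' ⊆ s₁ := fun z hz => Finset.mem_of_mem_erase (hB'.1 hz)
          have hm₀B' : m₀ ∉ B' := fun h => (Finset.mem_erase.mp (hB's₁ h)).1 rfl
          exact Finset.erase_insert hm₀B'
        · -- forward
          intro B hB
          simp only [hA, Finset.mem_filter, Finset.mem_powerset] at hB ⊢
          obtain ⟨⟨hBs, hm₀B, hspr, hcardB⟩, hm₁B⟩ := hB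
          have hspr1 : spread s₁ (B.erase m₀) := (spread_erase_min_iff hs hm₀B).mp hspr
          have hBsub1 : B.erase m₀ ⊆ s₁ := Finset.erase_subset_erase m₀ hBs
          have hm₁B' : m₁ ∉ B.erase m₀ := fun h => hm₁B (Finset.mem_of_mem_erase h)
          have hm₂B : m₂ ∈ B.erase m₀ :=
            min_erase_mem_of_spread hs₁ hBsub1 hm₁B' hs₂ hspr1
          have hBsub2 : B.erase m₀ ⊆ s₂ := by
            intro z hz
            exact Finset.mem_erase.mpr ⟨fun h => hm₁B' (h ▸ hz), hBsub1 hz⟩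
          refine ⟨hBsub2, hm₂B, ?_, ?_⟩
          · exact (spread_erase_min_iff' hs₁ hBsub2 hs₂ hm₂B).mp hspr1
          · rw [Finset.card_erase_of_mem hm₀B, hcardB]; omega
        · -- backward
          intro B' hB'
          simp only [Finset.mem_filter, Finset.mem_powerset] at hB'
          obtain ⟨hBs, hm₂B, hspr, hcardB⟩ := hB'
          have hB's₁ : B' ⊆ s₁ := fun z hz => Finset.mem_of_mem_erase (hBs hz)
          have hm₀B' : m₀ ∉ B' := fun h => (Finset.mem_erase.mp (hB's₁ h)).1 rfl
          have hm₁B' : m₁ ∉ B' := fun h => (Finset.mem_erase.mp (hBs h)).1 rfl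
          have hspr1 : spread s₁ B' := (spread_erase_min_iff' hs₁ hBs hs₂ hm₂B).mpr hspr
          simp only [hA, Finset.mem_filter, Finset.mem_powerset]
          refine ⟨⟨?_, Finset.mem_insert_self _ _, ?_, ?_⟩, ?_⟩
          · intro z hz
            rcases Finset.mem_insert.mp hz with rfl | hz
            · exact hm₀s
            · exact Finset.mem_of_mem_erase (hB's₁ hz)
          · have := (spread_erase_min_iff hs (B := insert m₀ B')
              (Finset.mem_insert_self _ _))
            rw [Finset.erase_insert hm₀B'] at this
            exact this.mpr hspr1
          · rw [Finset.card_insert_of_notMem hm₀B', hcardB]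
          · intro h
            rcases Finset.mem_insert.mp h with h' | h'
            · exact absurd h' (ne_of_gt hm₀₁)
            · exact hm₁B' h'
      rw [← hsplit, hclaim1, hclaim2]
      obtain ⟨j, hjj⟩ : ∃ j, s.card - (k+1) = j + 1 := ⟨s.card - (k+1) - 1, by omega⟩
      have e1 : s₁.card - k = j + 1 := by omega
      have e2 : s₂.card - k = j := by omega
      rw [e1, e2, hjj, Nat.choose_succ_succ, Nat.succ_eq_add_one]
      omega

end Count



section NCpart
variable {α : Type*} [LinearOrder α] [DecidableEq α]

/-- Same block relation. -/
def SB {s : Finset α} (π : Finpartition s) (p q : α) : Prop :=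
  ∃ B ∈ π.parts, p ∈ B ∧ q ∈ B

/-- Non-crossing partition of a finset in a linear order. -/
def NC {s : Finset α} (π : Finpartition s) : Prop :=
  ¬ ∃ p₁ q₁ p₂ q₂ : α, p₁ < q₁ ∧ q₁ < p₂ ∧ p₂ < q₂ ∧
      SB π p₁ p₂ ∧ SB π q₁ q₂ ∧ ¬ SB π p₁ q₁

/-- blocks are uniquely determined -/
lemma sb_down {s t : Finset α} {π : Finpartition s} {ρ : Finpartition t}
    (h : π.parts ⊆ ρ.parts) {p q : α} (hp : ∃ X ∈ π.parts, p ∈ X) (hsb : SB ρ p q) :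
    SB π p q := by
  obtain ⟨X, hX, hpX⟩ := hp
  obtain ⟨Y, hY, hpY, hqY⟩ := hsb
  have hXY : X = Y := ρ.eq_of_mem_parts (h hX) hY hpX hpY
  exact ⟨X, hX, hpX, hXY ▸ hqY⟩

lemma SB_mono {s t : Finset α} {π : Finpartition s} {ρ : Finpartition t}
    (h : π.parts ⊆ ρ.parts) {p q : α} (hsb : SB π p q) : SB ρ p q := by
  obtain ⟨X, hX, h1, h2⟩ := hsb
  exact ⟨X, h hX, h1, h2⟩

lemma NC_subset {s t : Finset α} {π : Finpartition s} {ρ : Finpartition t}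
    (h : π.parts ⊆ ρ.parts) (hρ : NC ρ) : NC π := by
  rintro ⟨p₁, q₁, p₂, q₂, h1, h2, h3, hA, hB, hC⟩
  refine hρ ⟨p₁, q₁, p₂, q₂, h1, h2, h3, SB_mono h hA, SB_mono h hB, ?_⟩
  intro hsb
  obtain ⟨X, hX, hpX, _⟩ := hA
  exact hC (sb_down h ⟨X, hX, hpX⟩ hsb)

/-- weight of a partition -/
noncomputable def nu {s : Finset α} (π : Finpartition s) : ℂ := ∏ B ∈ π.parts, cw B.card

/-- Sum of `f` over all elements satisfying `p`, with a fixed classical instance. -/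
noncomputable def wsum {β : Type*} [Fintype β] (p : β → Prop) (f : β → ℂ) : ℂ :=
  ∑ b ∈ @Finset.filter β p (Classical.decPred p) Finset.univ, f b

/-- Restriction of a partition to `P`, assuming every block lies in `P` or in `R`. -/
def resL {P R s : Finset α} (hPR : P ∪ R = s) (hd : Disjoint P R) (τ : Finpartition s)
    (h : ∀ X ∈ τ.parts, X ⊆ P ∨ X ⊆ R) : Finpartition P :=
  τ.ofSubset (Finset.filter_subset (· ⊆ P) τ.parts) (by
    apply le_antisymm
    · exact Finset.sup_le fun X hX => (Finset.mem_filter.mp hX).2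
    · intro x hx
      have hxs : x ∈ s := by rw [← hPR]; exact Finset.mem_union_left _ hx
      obtain ⟨X, hX, hxX⟩ := τ.exists_mem hxs
      rcases h X hX with hsub | hsub
      · exact Finset.mem_sup.mpr ⟨X, Finset.mem_filter.mpr ⟨hX, hsub⟩, hxX⟩
      · exact absurd (hsub hxX) (Finset.disjoint_left.mp hd hx))

lemma resL_parts {P R s : Finset α} (hPR : P ∪ R = s) (hd : Disjoint P R) (τ : Finpartition s)
    (h : ∀ X ∈ τ.parts, X ⊆ P ∨ X ⊆ R) :
    (resL hPR hd τ h).parts = τ.parts.filter (· ⊆ P) := rfl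

def resR {P R s : Finset α} (hPR : P ∪ R = s) (hd : Disjoint P R) (τ : Finpartition s)
    (h : ∀ X ∈ τ.parts, X ⊆ P ∨ X ⊆ R) : Finpartition R :=
  resL (by rw [Finset.union_comm]; exact hPR) hd.symm τ (fun X hX => (h X hX).symm)

lemma resR_parts {P R s : Finset α} (hPR : P ∪ R = s) (hd : Disjoint P R) (τ : Finpartition s)
    (h : ∀ X ∈ τ.parts, X ⊆ P ∨ X ⊆ R) :
    (resR hPR hd τ h).parts = τ.parts.filter (· ⊆ R) := rfl

/-- Disjoint union of partitions of disjoint finsets. -/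
def joinP {P R s : Finset α} (hPR : P ∪ R = s) (hd : Disjoint P R)
    (τ₁ : Finpartition P) (τ₂ : Finpartition R) : Finpartition s :=
  Finpartition.copy
    { parts := τ₁.parts ∪ τ₂.parts
      supIndep := by
        rw [Finset.supIndep_iff_pairwiseDisjoint]
        intro X hX Y hY hXY
        simp only [Finset.coe_union, Set.mem_union, Finset.mem_coe] at hX hY
        rcases hX with hX | hX <;> rcases hY with hY | hY
        · exact τ₁.disjoint hX hY hXY
        · exact hd.mono (τ₁.le hX) (τ₂.le hY)
        · exact hd.symm.mono (τ₂.le hX) (τ₁.le hY)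
        · exact τ₂.disjoint hX hY hXY
      sup_parts := by rw [Finset.sup_union, τ₁.sup_parts, τ₂.sup_parts, Finset.sup_eq_union]
      bot_notMem := by
        rw [Finset.mem_union]
        rintro (h | h)
        · exact τ₁.bot_notMem h
        · exact τ₂.bot_notMem h } hPR

lemma joinP_parts {P R s : Finset α} (hPR : P ∪ R = s) (hd : Disjoint P R)
    (τ₁ : Finpartition P) (τ₂ : Finpartition R) :
    (joinP hPR hd τ₁ τ₂).parts = τ₁.parts ∪ τ₂.parts := rfl

lemma joinP_split {P R s : Finset α} (hPR : P ∪ R = s) (hd : Disjoint P R)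
    (τ₁ : Finpartition P) (τ₂ : Finpartition R) :
    ∀ X ∈ (joinP hPR hd τ₁ τ₂).parts, X ⊆ P ∨ X ⊆ R := by
  intro X hX
  rw [joinP_parts, Finset.mem_union] at hX
  rcases hX with hX | hX
  · exact Or.inl (τ₁.le hX)
  · exact Or.inr (τ₂.le hX)

lemma parts_disjoint {P R : Finset α} (hd : Disjoint P R)
    (τ₁ : Finpartition P) (τ₂ : Finpartition R) : Disjoint τ₁.parts τ₂.parts := by
  rw [Finset.disjoint_left]
  intro X h1 h2
  have hX : X ≤ ⊥ := le_trans (le_inf (τ₁.le h1) (τ₂.le h2)) hd.le_bot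
  exact τ₁.bot_notMem ((le_bot_iff.mp hX) ▸ h1)

lemma nu_joinP {P R s : Finset α} (hPR : P ∪ R = s) (hd : Disjoint P R)
    (τ₁ : Finpartition P) (τ₂ : Finpartition R) :
    nu (joinP hPR hd τ₁ τ₂) = nu τ₁ * nu τ₂ := by
  rw [nu, joinP_parts, Finset.prod_union (parts_disjoint hd τ₁ τ₂)]
  rfl

lemma joinP_res {P R s : Finset α} (hPR : P ∪ R = s) (hd : Disjoint P R) (τ : Finpartition s)
    (h : ∀ X ∈ τ.parts, X ⊆ P ∨ X ⊆ R) :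
    joinP hPR hd (resL hPR hd τ h) (resR hPR hd τ h) = τ := by
  apply Finpartition.ext
  rw [joinP_parts, resL_parts, resR_parts]
  ext X
  rw [Finset.mem_union, Finset.mem_filter, Finset.mem_filter]
  constructor
  · rintro (⟨h1, _⟩ | ⟨h1, _⟩) <;> exact h1
  · intro hX
    rcases h X hX with h1 | h1
    · exact Or.inl ⟨hX, h1⟩
    · exact Or.inr ⟨hX, h1⟩

lemma resL_joinP {P R s : Finset α} (hPR : P ∪ R = s) (hd : Disjoint P R)
    (τ₁ : Finpartition P) (τ₂ : Finpartition R)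
    (h : ∀ X ∈ (joinP hPR hd τ₁ τ₂).parts, X ⊆ P ∨ X ⊆ R) :
    resL hPR hd (joinP hPR hd τ₁ τ₂) h = τ₁ := by
  apply Finpartition.ext
  rw [resL_parts, joinP_parts]
  ext X
  rw [Finset.mem_filter, Finset.mem_union]
  constructor
  · rintro ⟨hX | hX, hsub⟩
    · exact hX
    · exfalso
      have hXbot : X ≤ ⊥ := le_trans (le_inf hsub (τ₂.le hX)) hd.le_bot
      exact τ₂.bot_notMem ((le_bot_iff.mp hXbot) ▸ hX)
  · intro hX
    exact ⟨Or.inl hX, τ₁.le hX⟩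

lemma resR_joinP {P R s : Finset α} (hPR : P ∪ R = s) (hd : Disjoint P R)
    (τ₁ : Finpartition P) (τ₂ : Finpartition R)
    (h : ∀ X ∈ (joinP hPR hd τ₁ τ₂).parts, X ⊆ P ∨ X ⊆ R) :
    resR hPR hd (joinP hPR hd τ₁ τ₂) h = τ₂ := by
  apply Finpartition.ext
  rw [resR_parts, joinP_parts]
  ext X
  rw [Finset.mem_filter, Finset.mem_union]
  constructor
  · rintro ⟨hX | hX, hsub⟩
    · exfalso
      have hXbot : X ≤ ⊥ := le_trans (le_inf (τ₁.le hX) hsub) hd.le_bot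
      exact τ₁.bot_notMem ((le_bot_iff.mp hXbot) ▸ hX)
    · exact hX
  · intro hX
    exact ⟨Or.inr hX, τ₂.le hX⟩

lemma sum_split {P R s : Finset α} (hPR : P ∪ R = s) (hd : Disjoint P R)
    (predT : Finpartition s → Prop) (pred₁ : Finpartition P → Prop)
    (pred₂ : Finpartition R → Prop)
    (H0 : ∀ τ, predT τ → ∀ X ∈ τ.parts, X ⊆ P ∨ X ⊆ R)
    (H1 : ∀ τ (hT : predT τ), pred₁ (resL hPR hd τ (H0 τ hT)) ∧
        pred₂ (resR hPR hd τ (H0 τ hT)))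
    (H2 : ∀ τ₁ τ₂, pred₁ τ₁ → pred₂ τ₂ → predT (joinP hPR hd τ₁ τ₂)) :
    wsum predT nu = wsum pred₁ nu * wsum pred₂ nu := by
  classical
  rw [wsum, wsum, wsum, Finset.sum_mul_sum, ← Finset.sum_product']
  refine Finset.sum_bij'
    (fun τ hτ => (resL hPR hd τ (H0 τ (Finset.mem_filter.mp hτ).2),
                  resR hPR hd τ (H0 τ (Finset.mem_filter.mp hτ).2)))
    (fun p hp => joinP hPR hd p.1 p.2) ?_ ?_ ?_ ?_ ?_
  · intro τ hτ
    have hT := (Finset.mem_filter.mp hτ).2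
    rw [Finset.mem_product]
    exact ⟨Finset.mem_filter.mpr ⟨Finset.mem_univ _, (H1 τ hT).1⟩,
      Finset.mem_filter.mpr ⟨Finset.mem_univ _, (H1 τ hT).2⟩⟩
  · intro p hp
    rw [Finset.mem_product, Finset.mem_filter, Finset.mem_filter] at hp
    exact Finset.mem_filter.mpr ⟨Finset.mem_univ _, H2 p.1 p.2 hp.1.2 hp.2.2⟩
  · intro τ hτ
    exact joinP_res hPR hd τ (H0 τ (Finset.mem_filter.mp hτ).2)
  · intro p hp
    exact Prod.ext (resL_joinP hPR hd p.1 p.2 (joinP_split hPR hd p.1 p.2))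
      (resR_joinP hPR hd p.1 p.2 (joinP_split hPR hd p.1 p.2))
  · intro τ hτ
    have hT := (Finset.mem_filter.mp hτ).2
    conv_lhs => rw [← joinP_res hPR hd τ (H0 τ hT)]
    rw [nu_joinP]

end NCpart

section NCpart2
variable {α : Type*} [LinearOrder α] [DecidableEq α]

/-- Partition of `s \ P` obtained by deleting the part `P`. -/
def erasePart {s : Finset α} (σ : Finpartition s) {P : Finset α} (hP : P ∈ σ.parts) :
    Finpartition (s \ P) :=
  σ.ofSubset (Finset.erase_subset P σ.parts) (by
    apply le_antisymm
    · apply Finset.sup_le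
      intro Q hQ
      rw [Finset.mem_erase] at hQ
      intro z hz
      rw [Finset.mem_sdiff]
      refine ⟨σ.le hQ.2 hz, fun hzP => ?_⟩
      exact Finset.disjoint_left.mp
        (σ.disjoint (Finset.mem_coe.mpr hQ.2) (Finset.mem_coe.mpr hP) hQ.1) hz hzP
    · intro x hx
      rw [Finset.mem_sdiff] at hx
      obtain ⟨Q, hQ, hxQ⟩ := σ.exists_mem hx.1
      have hQP : Q ≠ P := fun h => hx.2 (h ▸ hxQ)
      exact Finset.mem_sup.mpr ⟨Q, Finset.mem_erase.mpr ⟨hQP, hQ⟩, hxQ⟩)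

lemma erasePart_parts {s : Finset α} (σ : Finpartition s) {P : Finset α} (hP : P ∈ σ.parts) :
    (erasePart σ hP).parts = σ.parts.erase P := rfl

lemma NC_joinP_of_sigma {s : Finset α} {σ : Finpartition s} (hσ : NC σ) {P : Finset α}
    (hP : P ∈ σ.parts) (hPR : P ∪ (s \ P) = s) (hd : Disjoint P (s \ P))
    {τ₁ : Finpartition P} {τ₂ : Finpartition (s \ P)}
    (h1 : NC τ₁) (h2 : NC τ₂) (h2le : τ₂ ≤ erasePart σ hP) :
    NC (joinP hPR hd τ₁ τ₂) := by
  have sub₁ : τ₁.parts ⊆ (joinP hPR hd τ₁ τ₂).parts := by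
    rw [joinP_parts]; exact Finset.subset_union_left
  have sub₂ : τ₂.parts ⊆ (joinP hPR hd τ₁ τ₂).parts := by
    rw [joinP_parts]; exact Finset.subset_union_right
  rintro ⟨p₁, q₁, p₂, q₂, l1, l2, l3, ⟨X, hX, hp1, hp2⟩, ⟨Y, hY, hq1, hq2⟩, hC⟩
  rw [joinP_parts, Finset.mem_union] at hX hY
  rcases hX with hX | hX <;> rcases hY with hY | hY
  · -- both in τ₁
    exact h1 ⟨p₁, q₁, p₂, q₂, l1, l2, l3, ⟨X, hX, hp1, hp2⟩, ⟨Y, hY, hq1, hq2⟩,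
      fun hsb => hC (SB_mono sub₁ hsb)⟩
  · -- X in τ₁ (⊆ P), Y in τ₂
    obtain ⟨Q, hQ, hYQ⟩ := h2le hY
    rw [erasePart_parts, Finset.mem_erase] at hQ
    refine hσ ⟨p₁, q₁, p₂, q₂, l1, l2, l3,
      ⟨P, hP, τ₁.le hX hp1, τ₁.le hX hp2⟩,
      ⟨Q, hQ.2, hYQ hq1, hYQ hq2⟩, ?_⟩
    rintro ⟨Z, hZ, hpZ, hqZ⟩
    have hZP : Z = P := σ.eq_of_mem_parts hZ hP hpZ (τ₁.le hX hp1)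
    have hPQ : P = Q := σ.eq_of_mem_parts hP hQ.2 (hZP ▸ hqZ) (hYQ hq1)
    exact hQ.1 hPQ.symm
  · -- X in τ₂ (⊆ some Q ≠ P), Y in τ₁ (⊆ P)
    obtain ⟨Q, hQ, hXQ⟩ := h2le hX
    rw [erasePart_parts, Finset.mem_erase] at hQ
    refine hσ ⟨p₁, q₁, p₂, q₂, l1, l2, l3,
      ⟨Q, hQ.2, hXQ hp1, hXQ hp2⟩,
      ⟨P, hP, τ₁.le hY hq1, τ₁.le hY hq2⟩, ?_⟩
    rintro ⟨Z, hZ, hpZ, hqZ⟩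
    have hZQ : Z = Q := σ.eq_of_mem_parts hZ hQ.2 hpZ (hXQ hp1)
    have hQP : Q = P := σ.eq_of_mem_parts hQ.2 hP (hZQ ▸ hqZ) (τ₁.le hY hq1)
    exact hQ.1 hQP
  · -- both in τ₂
    exact h2 ⟨p₁, q₁, p₂, q₂, l1, l2, l3, ⟨X, hX, hp1, hp2⟩, ⟨Y, hY, hq1, hq2⟩,
      fun hsb => hC (SB_mono sub₂ hsb)⟩

noncomputable def TT {s : Finset α} (σ : Finpartition s) : ℂ :=
  wsum (fun τ : Finpartition s => NC τ ∧ τ ≤ σ) nu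

noncomputable def GG (s : Finset α) : ℂ :=
  wsum (fun τ : Finpartition s => NC τ) nu

lemma TT_step {s : Finset α} (σ : Finpartition s) (hσ : NC σ) {P : Finset α}
    (hP : P ∈ σ.parts) :
    TT σ = GG P * TT (erasePart σ hP) := by
  have hPs : P ⊆ s := σ.le hP
  have hPR : P ∪ (s \ P) = s := Finset.union_sdiff_of_subset hPs
  have hd : Disjoint P (s \ P) := Finset.disjoint_sdiff
  rw [TT, GG, TT]
  refine sum_split hPR hd _ _ _ ?_ ?_ ?_
  · -- H0
    rintro τ ⟨hNC, hle⟩ X hX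
    obtain ⟨Q, hQ, hXQ⟩ := hle hX
    rcases eq_or_ne Q P with rfl | hne
    · exact Or.inl hXQ
    · refine Or.inr fun z hz => Finset.mem_sdiff.mpr ⟨σ.le hQ (hXQ hz), fun hzP => ?_⟩
      exact Finset.disjoint_left.mp
        (σ.disjoint (Finset.mem_coe.mpr hQ) (Finset.mem_coe.mpr hP) hne) (hXQ hz) hzP
  · -- H1
    rintro τ ⟨hNC, hle⟩
    refine ⟨NC_subset (Finset.filter_subset _ _) hNC,
      NC_subset (Finset.filter_subset _ _) hNC, ?_⟩
    intro X hX
    rw [resR_parts] at hX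
    rw [Finset.mem_filter] at hX
    obtain ⟨hXτ, hXR⟩ := hX
    obtain ⟨Q, hQ, hXQ⟩ := hle hXτ
    obtain ⟨x, hx⟩ := τ.nonempty_of_mem_parts hXτ
    have hQP : Q ≠ P := by
      rintro rfl
      exact (Finset.mem_sdiff.mp (hXR hx)).2 (hXQ hx)
    exact ⟨Q, by rw [erasePart_parts]; exact Finset.mem_erase.mpr ⟨hQP, hQ⟩, hXQ⟩
  · -- H2
    rintro τ₁ τ₂ h1 ⟨h2NC, h2le⟩
    refine ⟨NC_joinP_of_sigma hσ hP hPR hd h1 h2NC h2le, ?_⟩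
    intro X hX
    rw [joinP_parts, Finset.mem_union] at hX
    rcases hX with hX | hX
    · exact ⟨P, hP, τ₁.le hX⟩
    · obtain ⟨Q, hQ, hXQ⟩ := h2le hX
      rw [erasePart_parts] at hQ
      exact ⟨Q, Finset.mem_of_mem_erase hQ, hXQ⟩

end NCpart2

section Gap
variable {α : Type*} [LinearOrder α] [DecidableEq α]

/-- Number of elements of `B` below `x`. -/
def gIdx (B : Finset α) (x : α) : ℕ := (B.filter (· < x)).card

lemma gIdx_mono (B : Finset α) {x y : α} (h : x ≤ y) : gIdx B x ≤ gIdx B y :=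
  Finset.card_le_card (fun b hb => Finset.mem_filter.mpr
    ⟨(Finset.mem_filter.mp hb).1, lt_of_lt_of_le (Finset.mem_filter.mp hb).2 h⟩)

lemma gIdx_lt {B : Finset α} {x y b : α} (hb : b ∈ B) (hxb : x ≤ b) (hby : b < y) :
    gIdx B x < gIdx B y := by
  apply Finset.card_lt_card
  rw [Finset.ssubset_iff_of_subset (fun c hc => Finset.mem_filter.mpr
    ⟨(Finset.mem_filter.mp hc).1, lt_of_lt_of_le (Finset.mem_filter.mp hc).2
      (le_trans hxb hby.le)⟩)]
  exact ⟨b, Finset.mem_filter.mpr ⟨hb, hby⟩,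
    fun hmem => absurd (Finset.mem_filter.mp hmem).2 (not_lt.mpr hxb)⟩

lemma between_of_gIdx_ne {B : Finset α} {x y : α} (hxy : x < y) (hx : x ∉ B)
    (h : gIdx B x ≠ gIdx B y) : ∃ b ∈ B, x < b ∧ b < y := by
  by_contra hno
  push_neg at hno
  apply h
  apply le_antisymm (gIdx_mono B hxy.le)
  apply Finset.card_le_card
  intro b hb
  rw [Finset.mem_filter] at hb ⊢
  refine ⟨hb.1, ?_⟩
  rcases lt_or_ge b x with h1 | h1
  · exact h1
  · exfalso
    have hbx : x < b := lt_of_le_of_ne h1 (fun h' => hx (h' ▸ hb.1))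
    exact absurd hb.2 (not_lt.mpr (hno b hb.1 hbx))

/-- the gap containing x -/
def fiber (s B : Finset α) (x : α) : Finset α :=
  (s \ B).filter (fun y => gIdx B y = gIdx B x)

/-- The partition of `s \ B` into the gaps of `B`. -/
def gapPart (s B : Finset α) : Finpartition (s \ B) where
  parts := (s \ B).image (fiber s B)
  supIndep := by
    rw [Finset.supIndep_iff_pairwiseDisjoint]
    intro X hX Y hY hne
    simp only [Finset.coe_image, Set.mem_image, Finset.mem_coe] at hX hY
    obtain ⟨x, hx, rfl⟩ := hX
    obtain ⟨y, hy, rfl⟩ := hY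
    have hgne : gIdx B x ≠ gIdx B y := by
      intro h
      exact hne (by rw [fiber, fiber, h])
    show Disjoint (fiber s B x) (fiber s B y)
    rw [Finset.disjoint_left]
    intro z hz1 hz2
    rw [fiber, Finset.mem_filter] at hz1 hz2
    exact hgne (hz1.2 ▸ hz2.2)
  sup_parts := by
    apply le_antisymm
    · apply Finset.sup_le
      intro X hX
      obtain ⟨x, hx, rfl⟩ := Finset.mem_image.mp hX
      exact Finset.filter_subset _ _
    · intro z hz
      exact Finset.mem_sup.mpr ⟨fiber s B z, Finset.mem_image_of_mem _ hz,
        Finset.mem_filter.mpr ⟨hz, rfl⟩⟩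
  bot_notMem := by
    rw [Finset.mem_image]
    rintro ⟨x, hx, hbot⟩
    have hmem : x ∈ fiber s B x := Finset.mem_filter.mpr ⟨hx, rfl⟩
    rw [hbot] at hmem
    exact absurd hmem (Finset.notMem_empty x)

lemma gapPart_parts {s B : Finset α} : (gapPart s B).parts = (s \ B).image (fiber s B) := rfl

lemma gap_same {s B : Finset α} {X : Finset α} (hX : X ∈ (gapPart s B).parts)
    {x y : α} (hx : x ∈ X) (hy : y ∈ X) : gIdx B x = gIdx B y := by
  rw [gapPart_parts, Finset.mem_image] at hX
  obtain ⟨z, hz, rfl⟩ := hX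
  rw [fiber, Finset.mem_filter] at hx hy
  rw [hx.2, hy.2]

lemma NC_gapPart (s B : Finset α) : NC (gapPart s B) := by
  rintro ⟨p₁, q₁, p₂, q₂, l1, l2, l3, ⟨X, hX, hp1, hp2⟩, ⟨Y, hY, hq1, hq2⟩, hC⟩
  apply hC
  -- q₁ has the same gap index as p₁, and q₁ ∈ s \ B, so q₁ ∈ X
  have h1 : gIdx B p₁ = gIdx B p₂ := gap_same hX hp1 hp2
  have h2 : gIdx B p₁ ≤ gIdx B q₁ := gIdx_mono B l1.le
  have h3 : gIdx B q₁ ≤ gIdx B p₂ := gIdx_mono B (le_trans l2.le le_rfl)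
  have heq : gIdx B q₁ = gIdx B p₁ := by omega
  have hq₁sd : q₁ ∈ s \ B := (gapPart s B).le hY hq1
  -- X is the fiber of any of its elements
  rw [gapPart_parts, Finset.mem_image] at hX
  obtain ⟨z, hz, rfl⟩ := hX
  rw [fiber, Finset.mem_filter] at hp1
  refine ⟨fiber s B z, ?_, ?_, ?_⟩
  · rw [gapPart_parts]; exact Finset.mem_image_of_mem _ hz
  · exact Finset.mem_filter.mpr ⟨hp1.1, hp1.2⟩
  · exact Finset.mem_filter.mpr ⟨hq₁sd, by rw [heq, hp1.2]⟩

lemma le_gapPart_iff {s B : Finset α} (τ : Finpartition (s \ B)) :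
    τ ≤ gapPart s B ↔ ∀ X ∈ τ.parts, ∀ x ∈ X, ∀ y ∈ X, gIdx B x = gIdx B y := by
  constructor
  · intro h X hX x hx y hy
    obtain ⟨Y, hY, hXY⟩ := h hX
    exact gap_same hY (hXY hx) (hXY hy)
  · intro h X hX
    obtain ⟨x, hx⟩ := τ.nonempty_of_mem_parts hX
    have hxsd : x ∈ s \ B := τ.le hX hx
    refine ⟨fiber s B x, by rw [gapPart_parts]; exact Finset.mem_image_of_mem _ hxsd, ?_⟩
    intro y hy
    exact Finset.mem_filter.mpr ⟨τ.le hX hy, h X hX y hy x hx⟩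

end Gap

section Inst
variable {α : Type*} [LinearOrder α] [DecidableEq α]

lemma NC_of_parts_singleton {B : Finset α} {τ : Finpartition B} (hτ : τ.parts = {B}) :
    NC τ := by
  rintro ⟨p₁, q₁, p₂, q₂, l1, l2, l3, ⟨X, hX, hp1, hp2⟩, ⟨Y, hY, hq1, hq2⟩, hC⟩
  rw [hτ, Finset.mem_singleton] at hX hY
  exact hC ⟨B, by rw [hτ]; exact Finset.mem_singleton_self B, hX ▸ hp1, hY ▸ hq1⟩

lemma wsum_parts_singleton {B : Finset α} (hB : B ≠ ⊥) :
    wsum (fun τ : Finpartition B => τ.parts = {B}) nu = cw B.card := by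
  have heq : @Finset.filter (Finpartition B) (fun τ => τ.parts = {B})
      (Classical.decPred _) Finset.univ = {Finpartition.indiscrete hB} := by
    ext τ
    simp only [Finset.mem_filter, Finset.mem_univ, true_and, Finset.mem_singleton]
    constructor
    · intro h
      apply Finpartition.ext
      rw [h]
      rfl
    · rintro rfl
      rfl
  rw [wsum, heq, Finset.sum_singleton, nu]
  show ∏ X ∈ ({B} : Finset (Finset α)), cw X.card = cw B.card
  rw [Finset.prod_singleton]

lemma NC_joinP_of_gap {s B : Finset α} (hPR : B ∪ (s \ B) = s) (hd : Disjoint B (s \ B))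
    {τ₁ : Finpartition B} {τ₂ : Finpartition (s \ B)} (hτ₁ : τ₁.parts = {B})
    (h2 : NC τ₂) (hle : τ₂ ≤ gapPart s B) : NC (joinP hPR hd τ₁ τ₂) := by
  have sub₂ : τ₂.parts ⊆ (joinP hPR hd τ₁ τ₂).parts := by
    rw [joinP_parts]; exact Finset.subset_union_right
  have hBmem : B ∈ (joinP hPR hd τ₁ τ₂).parts := by
    rw [joinP_parts, hτ₁]
    exact Finset.mem_union_left _ (Finset.mem_singleton_self B)
  rintro ⟨p₁, q₁, p₂, q₂, l1, l2, l3, ⟨X, hX, hp1, hp2⟩, ⟨Y, hY, hq1, hq2⟩, hC⟩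
  rw [joinP_parts, hτ₁, Finset.mem_union, Finset.mem_singleton] at hX hY
  rcases hX with hXB | hX <;> rcases hY with hYB | hY
  · exact hC ⟨B, hBmem, hXB ▸ hp1, hYB ▸ hq1⟩
  · have hsame : gIdx B q₁ = gIdx B q₂ := (le_gapPart_iff τ₂).mp hle Y hY q₁ hq1 q₂ hq2
    exact absurd hsame (Nat.ne_of_lt (gIdx_lt (hXB ▸ hp2) l2.le l3))
  · have hsame : gIdx B p₁ = gIdx B p₂ := (le_gapPart_iff τ₂).mp hle X hX p₁ hp1 p₂ hp2
    exact absurd hsame (Nat.ne_of_lt (gIdx_lt (hYB ▸ hq1) l1.le l2))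
  · exact h2 ⟨p₁, q₁, p₂, q₂, l1, l2, l3, ⟨X, hX, hp1, hp2⟩, ⟨Y, hY, hq1, hq2⟩,
      fun hsb => hC (SB_mono sub₂ hsb)⟩

lemma GG_min_step {s : Finset α} (hs : s.Nonempty) :
    GG s = ∑ B ∈ (s.powerset.filter (fun B => s.min' hs ∈ B)),
      cw B.card * TT (gapPart s B) := by
  classical
  set m₀ := s.min' hs with hm₀
  have hm₀s : m₀ ∈ s := Finset.min'_mem s hs
  rw [GG, wsum]
  rw [← Finset.sum_fiberwise_of_maps_to (g := fun τ : Finpartition s => τ.part m₀)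
      (t := s.powerset.filter (fun B => m₀ ∈ B))
      (fun τ _ => Finset.mem_filter.mpr ⟨Finset.mem_powerset.mpr
        (τ.le (τ.part_mem.mpr hm₀s)), τ.mem_part hm₀s⟩) nu]
  apply Finset.sum_congr rfl
  intro B hB
  rw [Finset.mem_filter, Finset.mem_powerset] at hB
  obtain ⟨hBs, hm₀B⟩ := hB
  have hBne : B ≠ ⊥ := by
    rintro rfl
    exact absurd hm₀B (Finset.notMem_empty m₀)
  have hPR : B ∪ (s \ B) = s := Finset.union_sdiff_of_subset hBs
  have hd : Disjoint B (s \ B) := Finset.disjoint_sdiff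
  have hset : (@Finset.filter _ (fun τ : Finpartition s => NC τ)
        (Classical.decPred _) Finset.univ).filter (fun τ => τ.part m₀ = B)
      = @Finset.filter _ (fun τ : Finpartition s => NC τ ∧ τ.part m₀ = B)
          (Classical.decPred _) Finset.univ := by
    ext τ
    simp only [Finset.mem_filter, Finset.mem_univ, true_and]
  have hw : ∑ τ ∈ (@Finset.filter _ (fun τ : Finpartition s => NC τ)
        (Classical.decPred _) Finset.univ).filter (fun τ => τ.part m₀ = B), nu τ
      = wsum (fun τ : Finpartition s => NC τ ∧ τ.part m₀ = B) nu := by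
    rw [hset, wsum]
  rw [hw]
  have hres := sum_split hPR hd
    (fun τ : Finpartition s => NC τ ∧ τ.part m₀ = B)
    (fun τ₁ : Finpartition B => τ₁.parts = {B})
    (fun τ₂ : Finpartition (s \ B) => NC τ₂ ∧ τ₂ ≤ gapPart s B)
    (by -- H0
      rintro τ ⟨hNC, hpart⟩ X hX
      have hBparts : B ∈ τ.parts := hpart ▸ τ.part_mem.mpr hm₀s
      rcases eq_or_ne X B with rfl | hne
      · exact Or.inl Finset.Subset.rfl
      · refine Or.inr fun z hz => Finset.mem_sdiff.mpr ⟨τ.le hX hz, fun hzB => ?_⟩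
        exact hne (τ.eq_of_mem_parts hX hBparts hz hzB))
    (by -- H1
      rintro τ ⟨hNC, hpart⟩
      have hBparts : B ∈ τ.parts := hpart ▸ τ.part_mem.mpr hm₀s
      constructor
      · rw [resL_parts]
        ext X
        rw [Finset.mem_filter, Finset.mem_singleton]
        constructor
        · rintro ⟨hX, hXB⟩
          obtain ⟨x, hx⟩ := τ.nonempty_of_mem_parts hX
          exact τ.eq_of_mem_parts hX hBparts hx (hXB hx)
        · rintro rfl
          exact ⟨hBparts, Finset.Subset.rfl⟩
      · refine ⟨NC_subset (Finset.filter_subset _ _) hNC, (le_gapPart_iff _).mpr ?_⟩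
        intro X hX x hx y hy
        rw [resR_parts, Finset.mem_filter] at hX
        obtain ⟨hXτ, hXR⟩ := hX
        have key : ∀ u v, u ∈ X → v ∈ X → u < v → gIdx B u = gIdx B v := by
          intro u v hu hv huv
          by_contra hgne
          obtain ⟨b, hbB, hub, hbv⟩ := between_of_gIdx_ne huv
            ((Finset.mem_sdiff.mp (hXR hu)).2) hgne
          have hm₀u : m₀ < u := lt_of_le_of_ne
            (Finset.min'_le s u (Finset.mem_sdiff.mp (hXR hu)).1)
            (fun h => (Finset.mem_sdiff.mp (hXR hu)).2 (h ▸ hm₀B))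
          refine hNC ⟨m₀, u, b, v, hm₀u, hub, hbv,
            ⟨B, hBparts, hm₀B, hbB⟩, ⟨X, hXτ, hu, hv⟩, ?_⟩
          rintro ⟨Z, hZ, hmZ, huZ⟩
          have hZB : Z = B := τ.eq_of_mem_parts hZ hBparts hmZ hm₀B
          exact (Finset.mem_sdiff.mp (hXR hu)).2 (hZB ▸ huZ)
        rcases lt_trichotomy x y with h | h | h
        · exact key x y hx hy h
        · rw [h]
        · exact (key y x hy hx h).symm)
    (by -- H2
      rintro τ₁ τ₂ h1 h2'
      obtain ⟨h2, hle⟩ := h2'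
      refine ⟨NC_joinP_of_gap hPR hd h1 h2 hle, ?_⟩
      apply Finpartition.part_eq_of_mem
      · rw [joinP_parts, h1]
        exact Finset.mem_union_left _ (Finset.mem_singleton_self B)
      · exact hm₀B)
  rw [hres, wsum_parts_singleton hBne]
  rfl

end Inst

section Main
variable {α : Type*} [LinearOrder α] [DecidableEq α]

lemma prod_ind {s : Finset α} (σ : Finpartition s) :
    ∏ X ∈ σ.parts, (if X.card ≤ 1 then (1:ℂ) else 0)
      = if (∀ X ∈ σ.parts, X.card ≤ 1) then 1 else 0 := by
  classical
  by_cases h : ∀ X ∈ σ.parts, X.card ≤ 1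
  · rw [if_pos h]
    exact Finset.prod_eq_one (fun X hX => if_pos (h X hX))
  · rw [if_neg h]
    push_neg at h
    obtain ⟨X, hX, hcard⟩ := h
    exact Finset.prod_eq_zero hX (if_neg (by omega))

lemma gap_card_le_one_iff {s B : Finset α} :
    (∀ X ∈ (gapPart s B).parts, X.card ≤ 1) ↔ spread s B := by
  constructor
  · intro h x hx y hy hxy
    by_contra hno
    push_neg at hno
    have hgeq : gIdx B x = gIdx B y := by
      by_contra hgne
      obtain ⟨b, hbB, h1, h2⟩ := between_of_gIdx_ne hxy (Finset.mem_sdiff.mp hx).2 hgne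
      exact absurd h2 (not_lt.mpr (hno b hbB h1))
    have hxf : x ∈ fiber s B x := Finset.mem_filter.mpr ⟨hx, rfl⟩
    have hyf : y ∈ fiber s B x := Finset.mem_filter.mpr ⟨hy, hgeq.symm⟩
    have hmem : fiber s B x ∈ (gapPart s B).parts := by
      rw [gapPart_parts]; exact Finset.mem_image_of_mem _ hx
    have hlt : 1 < (fiber s B x).card :=
      Finset.one_lt_card.mpr ⟨x, hxf, y, hyf, ne_of_lt hxy⟩
    have := h _ hmem
    omega
  · intro hspr X hX
    by_contra hcard
    obtain ⟨u, hu, v, hv, huv⟩ := Finset.one_lt_card.mp (show 1 < X.card by omega)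
    have husd : u ∈ s \ B := (gapPart s B).le hX hu
    have hvsd : v ∈ s \ B := (gapPart s B).le hX hv
    have hsame : gIdx B u = gIdx B v := gap_same hX hu hv
    rcases lt_or_gt_of_ne huv with h | h
    · obtain ⟨b, hbB, h1, h2⟩ := hspr u husd v hvsd h
      exact absurd hsame (Nat.ne_of_lt (gIdx_lt hbB h1.le h2))
    · obtain ⟨b, hbB, h1, h2⟩ := hspr v hvsd u husd h
      exact absurd hsame.symm (Nat.ne_of_lt (gIdx_lt hbB h1.le h2))

lemma TT_of_parts_singleton {s : Finset α} {σ : Finpartition s} (hσ : σ.parts = {s}) :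
    TT σ = GG s := by
  rw [TT, GG, wsum, wsum]
  apply Finset.sum_congr _ (fun _ _ => rfl)
  ext τ
  simp only [Finset.mem_filter, Finset.mem_univ, true_and, and_iff_left_iff_imp]
  intro _ X hX
  exact ⟨s, by rw [hσ]; exact Finset.mem_singleton_self s, τ.le hX⟩

lemma parts_eq_singleton_of_card_one {s : Finset α} (h : s.card = 1) (τ : Finpartition s) :
    τ.parts = {s} := by
  have hs : s ≠ ⊥ := by
    rintro rfl
    simp at h
  obtain ⟨X, hX⟩ := τ.parts_nonempty hs
  have hXs : X = s := Finset.eq_of_subset_of_card_le (τ.le hX)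
    (by
      have : 0 < X.card := Finset.card_pos.mpr (τ.nonempty_of_mem_parts hX)
      omega)
  ext Y
  rw [Finset.mem_singleton]
  constructor
  · intro hY
    exact Finset.eq_of_subset_of_card_le (τ.le hY)
      (by
        have : 0 < Y.card := Finset.card_pos.mpr (τ.nonempty_of_mem_parts hY)
        omega)
  · rintro rfl
    exact hXs ▸ hX

lemma eq_bot_of_parts_small {s : Finset α} (σ : Finpartition s)
    (h : ∀ X ∈ σ.parts, X.card ≤ 1) : σ = ⊥ := by
  apply Finpartition.ext
  rw [Finpartition.parts_bot]
  ext X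
  rw [Finset.mem_map]
  constructor
  · intro hX
    obtain ⟨x, hx⟩ := σ.nonempty_of_mem_parts hX
    have hXx : X = {x} := by
      have h1 : X.card ≤ 1 := h X hX
      have h2 : 0 < X.card := Finset.card_pos.mpr ⟨x, hx⟩
      have hc : X.card = 1 := by omega
      obtain ⟨a, ha⟩ := Finset.card_eq_one.mp hc
      rw [ha] at hx ⊢
      rw [Finset.mem_singleton] at hx
      rw [hx]
    exact ⟨x, σ.le hX hx, hXx.symm⟩
  · rintro ⟨x, hxs, rfl⟩
    obtain ⟨Y, hY, hxY⟩ := σ.exists_mem hxs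
    have hYx : Y = {x} := by
      have h1 : Y.card ≤ 1 := h Y hY
      have h2 : 0 < Y.card := Finset.card_pos.mpr ⟨x, hxY⟩
      have hc : Y.card = 1 := by omega
      obtain ⟨a, ha⟩ := Finset.card_eq_one.mp hc
      rw [ha] at hxY ⊢
      rw [Finset.mem_singleton] at hxY
      rw [hxY]
    show ({x} : Finset α) ∈ σ.parts
    exact hYx ▸ hY

lemma cw_one : cw 1 = 1 := by simp [cw]

lemma NC_bot (s : Finset α) : NC (⊥ : Finpartition s) := by
  rintro ⟨p₁, q₁, p₂, q₂, l1, l2, l3, ⟨X, hX, hp1, hp2⟩, _, _⟩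
  rw [Finpartition.mem_bot_iff] at hX
  obtain ⟨a, ha, hat⟩ := hX
  rw [← hat, Finset.mem_singleton] at hp1 hp2
  exact absurd (lt_trans l1 l2) (by rw [hp1, hp2]; exact lt_irrefl a)

lemma nu_bot (s : Finset α) : nu (⊥ : Finpartition s) = 1 := by
  rw [nu, Finpartition.parts_bot, Finset.prod_map]
  apply Finset.prod_eq_one
  intro x _
  show cw ({x} : Finset α).card = 1
  rw [Finset.card_singleton, cw_one]

theorem TT_eval : ∀ (n : ℕ) (s : Finset α), s.card ≤ n →
    ∀ (σ : Finpartition s), NC σ →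
    TT σ = ∏ X ∈ σ.parts, (if X.card ≤ 1 then (1:ℂ) else 0) := by
  intro n
  induction n with
  | zero =>
    intro s hcard σ hσ
    -- s = ∅, σ has no parts
    have hparts : σ.parts = ∅ := by
      have := σ.card_parts_le_card
      exact Finset.card_eq_zero.mp (by omega)
    have huniq : ∀ τ : Finpartition s, τ = σ := by
      intro τ
      apply Finpartition.ext
      rw [hparts]
      have := τ.card_parts_le_card
      exact Finset.card_eq_zero.mp (by omega)
    have hfil : @Finset.filter _ (fun τ : Finpartition s => NC τ ∧ τ ≤ σ)
        (Classical.decPred _) Finset.univ = {σ} := by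
      ext τ
      simp only [Finset.mem_filter, Finset.mem_univ, true_and, Finset.mem_singleton]
      exact ⟨fun _ => huniq τ, fun h => by rw [h]; exact ⟨hσ, le_refl σ⟩⟩
    rw [TT, wsum, hfil, Finset.sum_singleton, nu, hparts, Finset.prod_empty,
      Finset.prod_empty]
  | succ n IH =>
    intro s hcard σ hσ
    classical
    rcases Nat.lt_or_ge σ.parts.card 2 with hp2 | hp2
    · rcases Nat.lt_or_ge σ.parts.card 1 with hp1 | hp1
      · -- no parts: s = ∅
        have hparts : σ.parts = ∅ := Finset.card_eq_zero.mp (by omega)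
        have hsempty : s = ∅ := Finpartition.parts_eq_empty_iff.mp hparts
        have huniq : ∀ τ : Finpartition s, τ = σ := by
          intro τ
          apply Finpartition.ext
          rw [hparts, Finpartition.parts_eq_empty_iff]
          exact hsempty
        have hfil : @Finset.filter _ (fun τ : Finpartition s => NC τ ∧ τ ≤ σ)
            (Classical.decPred _) Finset.univ = {σ} := by
          ext τ
          simp only [Finset.mem_filter, Finset.mem_univ, true_and, Finset.mem_singleton]
          exact ⟨fun _ => huniq τ, fun h => by rw [h]; exact ⟨hσ, le_refl σ⟩⟩
        rw [TT, wsum, hfil, Finset.sum_singleton, nu, hparts, Finset.prod_empty,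
          Finset.prod_empty]
      · -- exactly one part, which must be s
        have hpc : σ.parts.card = 1 := by omega
        obtain ⟨P, hP⟩ := Finset.card_eq_one.mp hpc
        have hPs : P = s := by
          have := σ.sup_parts
          rw [hP, Finset.sup_singleton] at this
          exact this
        subst hPs
        have hparts : σ.parts = {P} := hP
        -- now σ.parts = {s} with s := P
        rcases Nat.lt_or_ge P.card 2 with hc1 | hc2
        · -- s.card ≤ 1, and s nonempty so card = 1 : unique partition
          have hPne : P ≠ ⊥ := by
            rw [← Finpartition.parts_nonempty_iff (P := σ)]
            rw [hparts]
            exact Finset.singleton_nonempty P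
          have hPcard : P.card = 1 := by
            have : 0 < P.card := Finset.card_pos.mpr (Finset.nonempty_iff_ne_empty.mpr hPne)
            omega
          have huniq : ∀ τ : Finpartition P, τ = σ := by
            intro τ
            apply Finpartition.ext
            rw [parts_eq_singleton_of_card_one hPcard τ, hparts]
          have hfil : @Finset.filter _ (fun τ : Finpartition P => NC τ ∧ τ ≤ σ)
              (Classical.decPred _) Finset.univ = {σ} := by
            ext τ
            simp only [Finset.mem_filter, Finset.mem_univ, true_and, Finset.mem_singleton]
            exact ⟨fun _ => huniq τ, fun h => by rw [h]; exact ⟨hσ, le_refl σ⟩⟩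
          rw [TT, wsum, hfil, Finset.sum_singleton, nu, hparts, Finset.prod_singleton,
            Finset.prod_singleton, hPcard, cw_one, if_pos (by omega)]
        · -- the hard case : one block of size ≥ 2
          have hs : P.Nonempty := Finset.card_pos.mp (by omega)
          rw [TT_of_parts_singleton hparts, GG_min_step hs, hparts,
            Finset.prod_singleton, if_neg (by omega)]
          have hstep : ∀ B ∈ P.powerset.filter (fun B => P.min' hs ∈ B),
              cw B.card * TT (gapPart P B)
                = if spread P B then cw B.card else 0 := by
            intro B hB
            rw [Finset.mem_filter, Finset.mem_powerset] at hB
            have hBcard : 1 ≤ B.card := Finset.card_pos.mpr ⟨_, hB.2⟩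
            have hBsub : B ⊆ P := hB.1
            have hsd : (P \ B).card ≤ n := by
              rw [Finset.card_sdiff_of_subset hBsub]
              have := Finset.card_le_card hBsub
              omega
            rw [IH (P \ B) hsd (gapPart P B) (NC_gapPart P B), prod_ind]
            simp only [gap_card_le_one_iff]
            split_ifs with h
            · exact mul_one _
            · exact mul_zero _
          rw [Finset.sum_congr rfl hstep, ← Finset.sum_filter]
          set S := (P.powerset.filter (fun B => P.min' hs ∈ B)).filter
            (fun B => spread P B) with hS
          rw [← Finset.sum_fiberwise_of_maps_to (g := Finset.card)
            (t := Finset.range (P.card + 1))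
            (fun B hB => by
              rw [hS, Finset.mem_filter, Finset.mem_filter, Finset.mem_powerset] at hB
              exact Finset.mem_range.mpr (Nat.lt_succ_of_le
                (Finset.card_le_card hB.1.1))) (fun B => cw B.card)]
          have hval : ∀ k ∈ Finset.range (P.card + 1),
              (∑ B ∈ S.filter (fun B => B.card = k), cw B.card)
                = cw k * (Nat.choose k (P.card - k) : ℂ) := by
            intro k hk
            rw [Finset.mem_range] at hk
            have hsc : ∀ B ∈ S.filter (fun B => B.card = k), cw B.card = cw k := by
              intro B hB
              rw [Finset.mem_filter] at hB
              rw [hB.2]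
            rw [Finset.sum_congr rfl hsc, Finset.sum_const, nsmul_eq_mul, mul_comm]
            congr 1
            rcases Nat.eq_zero_or_pos k with rfl | hkpos
            · have hemp : S.filter (fun B => B.card = 0) = ∅ := by
                rw [Finset.filter_eq_empty_iff]
                intro B hB
                rw [hS, Finset.mem_filter, Finset.mem_filter] at hB
                intro hc
                rw [Finset.card_eq_zero] at hc
                subst hc
                exact absurd hB.1.2 (Finset.notMem_empty _)
              rw [hemp, Finset.card_empty, Nat.choose_eq_zero_of_lt (by omega)]
            · have hset2 : S.filter (fun B => B.card = k)
                  = P.powerset.filter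
                    (fun B => P.min' hs ∈ B ∧ spread P B ∧ B.card = k) := by
                ext B
                simp only [hS, Finset.mem_filter, Finset.mem_powerset]
                tauto
              rw [hset2, count_spread k hkpos P hs (by omega)]
          rw [Finset.sum_congr rfl hval]
          exact key_sum P.card (by omega)
    · -- at least two parts
      obtain ⟨P, hP, Q, hQ, hPQ⟩ := Finset.one_lt_card.mp hp2
      rw [TT_step σ hσ hP]
      have hPne : P ≠ ⊥ := σ.ne_bot hP
      have hQne : Q.Nonempty := σ.nonempty_of_mem_parts hQ
      have hsum := σ.sum_card_parts
      have hcards : P.card + Q.card ≤ s.card := by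
        calc P.card + Q.card = ∑ X ∈ ({P, Q} : Finset (Finset α)), X.card := by
              rw [Finset.sum_pair hPQ]
          _ ≤ ∑ X ∈ σ.parts, X.card := Finset.sum_le_sum_of_subset (by
              intro X hX
              rw [Finset.mem_insert, Finset.mem_singleton] at hX
              rcases hX with rfl | rfl <;> assumption)
          _ = s.card := hsum
      have hQpos : 0 < Q.card := Finset.card_pos.mpr hQne
      have hPcard : P.card ≤ n := by omega
      have hGG : GG P = (if P.card ≤ 1 then (1:ℂ) else 0) := by
        have hind : (Finpartition.indiscrete hPne).parts = {P} := rfl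
        rw [← TT_of_parts_singleton hind]
        rw [IH P hPcard _ (NC_of_parts_singleton hind)]
        rw [hind, Finset.prod_singleton]
      have hEcard : (s \ P).card ≤ n := by
        rw [Finset.card_sdiff_of_subset (σ.le hP)]
        have hPpos : 0 < P.card := Finset.card_pos.mpr (σ.nonempty_of_mem_parts hP)
        omega
      have hENC : NC (erasePart σ hP) :=
        NC_subset (by rw [erasePart_parts]; exact Finset.erase_subset _ _) hσ
      rw [IH (s \ P) hEcard _ hENC, hGG, erasePart_parts]
      rw [← Finset.mul_prod_erase σ.parts _ hP]

end Main

lemma isNonCrossing_iff_NC {n : ℕ} (π : Finpartition (Finset.univ : Finset (Fin n))) :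
    IsNonCrossing π ↔ NC π := Iff.rfl

/-- The Möbius function of `NC(n)` evaluated from the minimal partition `0_n = ⊥`
(singletons) to the maximal partition `1_n = ⊤` (one block) equals
`(−1)^{n−1} C_{n−1}`, where `C_{n−1} = (1/n)·binom(2(n−1), n−1)` is a Catalan number. -/
theorem moebiusNC_bot_top {n : ℕ} (hn : 1 ≤ n)
    (μ : Finpartition (Finset.univ : Finset (Fin n)) →
         Finpartition (Finset.univ : Finset (Fin n)) → ℂ)
    (hμ : IsMoebiusNC n μ) :
    μ ⊥ ⊤ = (-1 : ℂ) ^ (n - 1) * ((Nat.choose (2 * (n - 1)) (n - 1) : ℂ) / (n : ℂ)) := by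
  classical
  haveI : Nonempty (Fin n) := ⟨⟨0, by omega⟩⟩
  have key : ∀ (k : ℕ) (σ : Finpartition (Finset.univ : Finset (Fin n))),
      (Finset.univ.filter (fun τ => τ < σ)).card ≤ k → IsNonCrossing σ → μ ⊥ σ = nu σ := by
    intro k
    induction k with
    | zero =>
      intro σ hcount hσ
      by_cases hb : σ = ⊥
      · subst hb
        rw [hμ.1 ⊥ hσ, nu_bot]
      · exfalso
        have hmem : ⊥ ∈ Finset.univ.filter (fun τ => τ < σ) :=
          Finset.mem_filter.mpr ⟨Finset.mem_univ _,
            lt_of_le_of_ne bot_le (Ne.symm hb)⟩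
        have := Finset.card_pos.mpr ⟨⊥, hmem⟩
        omega
    | succ k IH =>
      intro σ hcount hσ
      by_cases hb : σ = ⊥
      · subst hb
        rw [hμ.1 ⊥ hσ, nu_bot]
      · have hE := hμ.2 ⊥ σ (NC_bot _) hσ bot_le (Ne.symm hb)
        have hsetF : {τ : Finpartition (Finset.univ : Finset (Fin n)) |
              IsNonCrossing τ ∧ ⊥ ≤ τ ∧ τ ≤ σ}
            = ↑(Finset.univ.filter
                (fun τ : Finpartition (Finset.univ : Finset (Fin n)) => NC τ ∧ τ ≤ σ)) := by
          ext τ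
          simp only [Set.mem_setOf_eq, Finset.coe_filter, Finset.mem_univ, true_and]
          constructor
          · rintro ⟨h1, _, h3⟩
            exact ⟨h1, h3⟩
          · rintro ⟨h1, h3⟩
            exact ⟨h1, bot_le, h3⟩
        rw [hsetF, finsum_mem_coe_finset] at hE
        set F := Finset.univ.filter
          (fun τ : Finpartition (Finset.univ : Finset (Fin n)) => NC τ ∧ τ ≤ σ) with hF
        have hσF : σ ∈ F := Finset.mem_filter.mpr ⟨Finset.mem_univ _, hσ, le_refl σ⟩
        rw [← Finset.sum_erase_add F _ hσF] at hE
        have hIH : ∀ τ ∈ F.erase σ, μ ⊥ τ = nu τ := by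
          intro τ hτ
          rw [Finset.mem_erase, hF, Finset.mem_filter] at hτ
          have hlt : τ < σ := lt_of_le_of_ne hτ.2.2.2 hτ.1
          apply IH τ ?_ hτ.2.2.1
          have hss : Finset.univ.filter (fun ρ => ρ < τ)
              ⊂ Finset.univ.filter (fun ρ => ρ < σ) := by
            constructor
            · intro ρ hρ
              rw [Finset.mem_filter] at hρ ⊢
              exact ⟨hρ.1, lt_trans hρ.2 hlt⟩
            · intro hsub
              have h1 : τ ∈ Finset.univ.filter (fun ρ => ρ < σ) :=
                Finset.mem_filter.mpr ⟨Finset.mem_univ _, hlt⟩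
              have h2 := hsub h1
              rw [Finset.mem_filter] at h2
              exact absurd h2.2 (lt_irrefl τ)
          have := Finset.card_lt_card hss
          omega
        rw [Finset.sum_congr rfl hIH] at hE
        have hTT : TT σ = 0 := by
          rw [TT_eval (Finset.univ : Finset (Fin n)).card Finset.univ le_rfl σ hσ]
          have hbig : ¬ ∀ X ∈ σ.parts, X.card ≤ 1 := fun h => hb (eq_bot_of_parts_small σ h)
          rw [prod_ind, if_neg hbig]
        have hTTF : TT σ = ∑ τ ∈ F, nu τ := by
          rw [TT, wsum, hF]
          apply Finset.sum_congr _ (fun _ _ => rfl)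
          ext τ
          simp only [Finset.mem_filter, Finset.mem_univ, true_and]
        rw [← Finset.sum_erase_add F _ hσF, hTT] at hTTF
        linear_combination hE + hTTF
  -- Apply at σ = ⊤
  have huniv_ne : (Finset.univ : Finset (Fin n)) ≠ ⊥ := by
    rw [Finset.bot_eq_empty]
    exact Finset.nonempty_iff_ne_empty.mp Finset.univ_nonempty
  have hTopParts : (⊤ : Finpartition (Finset.univ : Finset (Fin n))).parts
      = {(Finset.univ : Finset (Fin n))} := by
    rcases Finset.subset_singleton_iff.mp
      (Finpartition.parts_top_subset (Finset.univ : Finset (Fin n))) with h | h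
    · exact absurd (Finpartition.parts_eq_empty_iff.mp h) huniv_ne
    · exact h
  have hNCtop : IsNonCrossing (⊤ : Finpartition (Finset.univ : Finset (Fin n))) :=
    NC_of_parts_singleton hTopParts
  have hval := key _ ⊤ le_rfl hNCtop
  rw [hval, nu, hTopParts, Finset.prod_singleton, Finset.card_univ, Fintype.card_fin]
  -- cw n = (-1)^(n-1) * choose (2(n-1)) (n-1) / n
  have hcat : (n : ℂ) * (catalan (n-1) : ℂ) = (Nat.choose (2 * (n-1)) (n-1) : ℂ) := by
    have h1 : (n - 1 + 1) * catalan (n - 1) = Nat.centralBinom (n - 1) :=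
      succ_mul_catalan_eq_centralBinom (n - 1)
    have h2 : n - 1 + 1 = n := by omega
    rw [h2] at h1
    have h3 : Nat.centralBinom (n - 1) = Nat.choose (2 * (n - 1)) (n - 1) := rfl
    rw [h3] at h1
    exact_mod_cast congrArg (Nat.cast : ℕ → ℂ) h1
  rw [cw]
  congr 1
  have hn0 : (n : ℂ) ≠ 0 := Nat.cast_ne_zero.mpr (by omega)
  field_simp
  linear_combination hcat
end

section
/- (Stieltjes inversion formula.) Let μ be a probability measure on ℝ with Cauchy transform G_μ. Then for all real numbers a < b: lim_{ε→0⁺} ( −(1/π) ∫_a^b Im G_μ(x + iε) dx ) = μ((a, b)) + ½ μ({a}) + ½ μ({b}). In particular, if ν is another probability measure on ℝ with G_μ(z) = G_ν(z) for all z ∈ ℂ⁺, then μ = ν. -/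
open MeasureTheory Filter Complex

/-- The Cauchy transform `G_μ(z) = ∫ (z − t)⁻¹ dμ(t)` of a measure `μ` on `ℝ`. -/
noncomputable def cauchyTransform (μ : Measure ℝ) (z : ℂ) : ℂ :=
  ∫ t : ℝ, (z - (t : ℂ))⁻¹ ∂μ

lemma im_inv_eq (x ε t : ℝ) : ((↑x + ↑ε * I - (t:ℂ))⁻¹).im = -(ε / ((x - t)^2 + ε^2)) := by
  rw [Complex.inv_im]
  have h1 : (↑x + ↑ε * I - (t:ℂ)).im = ε := by simp
  have h2 : Complex.normSq (↑x + ↑ε * I - (t:ℂ)) = (x - t)^2 + ε^2 := by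
    rw [Complex.normSq_apply]
    simp
    ring
  rw [h1, h2]
  ring

lemma norm_inv_sub_le {z : ℂ} (hz : 0 < z.im) (t : ℝ) : ‖(z - (t:ℂ))⁻¹‖ ≤ (z.im)⁻¹ := by
  rw [norm_inv]
  apply inv_anti₀ hz
  calc z.im = (z - t).im := by simp
    _ ≤ |(z - t).im| := le_abs_self _
    _ ≤ ‖z - (t:ℂ)‖ := Complex.abs_im_le_norm _
    _ = ‖z - (t:ℂ)‖ := rfl

lemma integrable_inv_sub (μ : Measure ℝ) [IsFiniteMeasure μ] {z : ℂ} (hz : 0 < z.im) :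
    Integrable (fun t : ℝ => (z - (t:ℂ))⁻¹) μ := by
  refine (integrable_const (z.im)⁻¹).mono' ?_ (Eventually.of_forall fun t => norm_inv_sub_le hz t)
  apply Continuous.aestronglyMeasurable
  refine Continuous.inv₀ (by continuity) fun t h => ?_
  have : (z - (t:ℂ)).im = 0 := by rw [h]; simp
  simp at this
  exact hz.ne' this

lemma im_cauchy (μ : Measure ℝ) [IsFiniteMeasure μ] (x : ℝ) {ε : ℝ} (hε : 0 < ε) :
    (cauchyTransform μ (↑x + ↑ε * I)).im = -∫ t, ε / ((x - t)^2 + ε^2) ∂μ := by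
  have him : (0:ℝ) < (↑x + ↑ε * I : ℂ).im := by simpa using hε
  rw [cauchyTransform]
  have hswap := (Complex.imCLM.integral_comp_comm (integrable_inv_sub μ him))
  simp only [Complex.imCLM_apply] at hswap
  rw [← hswap, ← integral_neg]
  congr 1 with t
  rw [im_inv_eq]

lemma inner_integral (t : ℝ) {ε : ℝ} (hε : 0 < ε) (a b : ℝ) :
    ∫ x in a..b, ε / ((x - t)^2 + ε^2) =
      Real.arctan ((b - t)/ε) - Real.arctan ((a - t)/ε) := by
  have hd : ∀ x ∈ Set.uIcc a b, HasDerivAt (fun x => Real.arctan ((x - t)/ε))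
      (ε / ((x - t)^2 + ε^2)) x := by
    intro x _
    have h1 : HasDerivAt (fun x : ℝ => (x - t)/ε) (1/ε) x := by
      simpa using ((hasDerivAt_id x).sub_const t).div_const ε
    have := (Real.hasDerivAt_arctan ((x - t)/ε)).comp x h1
    refine this.congr_deriv ?_
    have hpos : (x - t)^2 + ε^2 > 0 := by positivity
    field_simp
    ring
  have hcont : IntervalIntegrable (fun x => ε / ((x - t)^2 + ε^2)) volume a b := by
    apply Continuous.intervalIntegrable
    refine Continuous.div continuous_const (by continuity) fun x => ?_
    positivity
  rw [intervalIntegral.integral_eq_sub_of_hasDerivAt hd hcont]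

lemma fubini_step (μ : Measure ℝ) [IsFiniteMeasure μ] {a b ε : ℝ} (hab : a ≤ b) (hε : 0 < ε) :
    ∫ x in a..b, (∫ t, ε / ((x - t)^2 + ε^2) ∂μ) =
      ∫ t, (Real.arctan ((b - t)/ε) - Real.arctan ((a - t)/ε)) ∂μ := by
  have hcont : Continuous (fun p : ℝ × ℝ => ε / ((p.1 - p.2)^2 + ε^2)) := by
    refine Continuous.div continuous_const (by continuity) fun p => ?_
    positivity
  have hint : Integrable (fun p : ℝ × ℝ => ε / ((p.1 - p.2)^2 + ε^2))
      ((volume.restrict (Set.Ioc a b)).prod μ) := by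
    refine (integrable_const (ε / ε^2)).mono' hcont.aestronglyMeasurable ?_
    refine Eventually.of_forall fun p => ?_
    rw [Real.norm_eq_abs, _root_.abs_of_nonneg (by positivity)]
    apply div_le_div_of_nonneg_left hε.le (by positivity)
    nlinarith [sq_nonneg (p.1 - p.2)]
  rw [intervalIntegral.integral_of_le hab]
  rw [MeasureTheory.integral_integral_swap hint]
  congr 1 with t
  rw [← intervalIntegral.integral_of_le hab, inner_integral t hε]

lemma key_identity (μ : Measure ℝ) [IsFiniteMeasure μ] {a b ε : ℝ} (hab : a ≤ b) (hε : 0 < ε) :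
    -(1 / Real.pi) * ∫ x in a..b, (cauchyTransform μ (↑x + ↑ε * I)).im =
      ∫ t, (Real.arctan ((b - t)/ε) - Real.arctan ((a - t)/ε)) / Real.pi ∂μ := by
  have h1 : (fun x : ℝ => (cauchyTransform μ (↑x + ↑ε * I)).im) =
      fun x => -∫ t, ε / ((x - t)^2 + ε^2) ∂μ := funext fun x => im_cauchy μ x hε
  rw [h1, intervalIntegral.integral_neg, fubini_step μ hab hε]
  rw [neg_mul_neg, ← integral_const_mul]
  congr 1 with t
  field_simp

lemma tendsto_arctan_div_pos {c : ℝ} (hc : 0 < c) :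
    Tendsto (fun ε : ℝ => Real.arctan (c/ε)) (nhdsWithin 0 (Set.Ioi 0)) (nhds (Real.pi/2)) := by
  have h1 : Tendsto (fun ε : ℝ => c/ε) (nhdsWithin 0 (Set.Ioi 0)) atTop := by
    simpa [div_eq_mul_inv] using tendsto_inv_nhdsGT_zero.const_mul_atTop hc
  exact tendsto_nhds_of_tendsto_nhdsWithin (Real.tendsto_arctan_atTop.comp h1)

lemma tendsto_arctan_div_neg {c : ℝ} (hc : c < 0) :
    Tendsto (fun ε : ℝ => Real.arctan (c/ε)) (nhdsWithin 0 (Set.Ioi 0))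
      (nhds (-(Real.pi/2))) := by
  have h : (fun ε : ℝ => Real.arctan (c/ε)) = fun ε => -Real.arctan ((-c)/ε) := by
    funext ε
    rw [← Real.arctan_neg]
    ring_nf
  rw [h]
  exact (tendsto_arctan_div_pos (by linarith)).neg

noncomputable def stieltjesLimit (a b t : ℝ) : ℝ :=
  Set.indicator (Set.Ioo a b) (fun _ => (1:ℝ)) t + Set.indicator {a} (fun _ => (1:ℝ)/2) t
    + Set.indicator {b} (fun _ => (1:ℝ)/2) t

lemma tendsto_F (a b : ℝ) (hab : a < b) (t : ℝ) :
    Tendsto (fun ε : ℝ => (Real.arctan ((b - t)/ε) - Real.arctan ((a - t)/ε)) / Real.pi)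
      (nhdsWithin 0 (Set.Ioi 0)) (nhds (stieltjesLimit a b t)) := by
  have hπ : (0:ℝ) < Real.pi := Real.pi_pos
  have e1 : (Real.pi/2 - -(Real.pi/2))/Real.pi = 1 := by field_simp; ring
  have e2 : (Real.pi/2 - 0)/Real.pi = 1/2 := by field_simp; ring
  have e3 : ((0:ℝ) - -(Real.pi/2))/Real.pi = 1/2 := by field_simp; ring
  rcases lt_trichotomy t a with h | h | h
  · have h1 := tendsto_arctan_div_pos (c := b - t) (by linarith)
    have h2 := tendsto_arctan_div_pos (c := a - t) (by linarith)
    have h3 := (h1.sub h2).div_const Real.pi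
    rw [sub_self, zero_div] at h3
    have hval : stieltjesLimit a b t = 0 := by
      norm_num [stieltjesLimit, Set.indicator_apply, Set.mem_Ioo,
        (by linarith : ¬ a < t), (by linarith : t ≠ a), (by linarith : t ≠ b)]
    rw [hval]; exact h3
  · subst h
    have h1 := tendsto_arctan_div_pos (c := b - t) (by linarith)
    have h2 : Tendsto (fun ε : ℝ => Real.arctan ((t - t)/ε)) (nhdsWithin 0 (Set.Ioi 0))
        (nhds 0) := by simp only [sub_self, zero_div, Real.arctan_zero]; exact tendsto_const_nhds
    have h3 := (h1.sub h2).div_const Real.pi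
    rw [e2] at h3
    have hval : stieltjesLimit t b t = 1/2 := by
      norm_num [stieltjesLimit, Set.indicator_apply, Set.mem_Ioo, hab.ne]
    rw [hval]; exact h3
  · rcases lt_trichotomy t b with h' | h' | h'
    · have h1 := tendsto_arctan_div_pos (c := b - t) (by linarith)
      have h2 := tendsto_arctan_div_neg (c := a - t) (by linarith)
      have h3 := (h1.sub h2).div_const Real.pi
      rw [e1] at h3
      have hval : stieltjesLimit a b t = 1 := by
        norm_num [stieltjesLimit, Set.indicator_apply, Set.mem_Ioo, h, h', h.ne', h'.ne]
      rw [hval]; exact h3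
    · subst h'
      have h1 : Tendsto (fun ε : ℝ => Real.arctan ((t - t)/ε)) (nhdsWithin 0 (Set.Ioi 0))
          (nhds 0) := by simp only [sub_self, zero_div, Real.arctan_zero]; exact tendsto_const_nhds
      have h2 := tendsto_arctan_div_neg (c := a - t) (by linarith)
      have h3 := (h1.sub h2).div_const Real.pi
      rw [e3] at h3
      have hval : stieltjesLimit a t t = 1/2 := by
        norm_num [stieltjesLimit, Set.indicator_apply, Set.mem_Ioo, hab.ne']
      rw [hval]; exact h3
    · have h1 := tendsto_arctan_div_neg (c := b - t) (by linarith)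
      have h2 := tendsto_arctan_div_neg (c := a - t) (by linarith)
      have h3 := (h1.sub h2).div_const Real.pi
      rw [sub_self, zero_div] at h3
      have hval : stieltjesLimit a b t = 0 := by
        norm_num [stieltjesLimit, Set.indicator_apply, Set.mem_Ioo,
          (by linarith : ¬ t < b), (by linarith : t ≠ a), (by linarith : t ≠ b)]
      rw [hval]; exact h3

lemma bound_F (a b t : ℝ) (ε : ℝ) :
    ‖(Real.arctan ((b - t)/ε) - Real.arctan ((a - t)/ε)) / Real.pi‖ ≤ 1 := by
  have hπ : (0:ℝ) < Real.pi := Real.pi_pos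
  rw [Real.norm_eq_abs, abs_div, abs_of_pos hπ, div_le_one hπ]
  have h1 := Real.arctan_lt_pi_div_two ((b - t)/ε)
  have h2 := Real.neg_pi_div_two_lt_arctan ((b - t)/ε)
  have h3 := Real.arctan_lt_pi_div_two ((a - t)/ε)
  have h4 := Real.neg_pi_div_two_lt_arctan ((a - t)/ε)
  rw [abs_le]
  constructor <;> linarith

lemma integrable_limit (μ : Measure ℝ) [IsFiniteMeasure μ] (a b : ℝ) :
    Integrable (fun t => stieltjesLimit a b t) μ := by
  unfold stieltjesLimit
  exact (((integrable_const (1:ℝ)).indicator measurableSet_Ioo).add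
    ((integrable_const ((1:ℝ)/2)).indicator (measurableSet_singleton a))).add
    ((integrable_const ((1:ℝ)/2)).indicator (measurableSet_singleton b))

lemma integral_limit (μ : Measure ℝ) [IsFiniteMeasure μ] (a b : ℝ) :
    ∫ t, stieltjesLimit a b t ∂μ =
      (μ (Set.Ioo a b)).toReal + (μ {a}).toReal / 2 + (μ {b}).toReal / 2 := by
  unfold stieltjesLimit
  have h1 : Integrable (fun t : ℝ => (Set.Ioo a b).indicator (fun _ => (1:ℝ)) t) μ :=
    (integrable_const (1:ℝ)).indicator measurableSet_Ioo
  have h2 : Integrable (fun t : ℝ => ({a} : Set ℝ).indicator (fun _ => (1:ℝ)/2) t) μ :=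
    (integrable_const ((1:ℝ)/2)).indicator (measurableSet_singleton a)
  have h3 : Integrable (fun t : ℝ => ({b} : Set ℝ).indicator (fun _ => (1:ℝ)/2) t) μ :=
    (integrable_const ((1:ℝ)/2)).indicator (measurableSet_singleton b)
  have h12 : Integrable (fun t : ℝ => (Set.Ioo a b).indicator (fun _ => (1:ℝ)) t +
      ({a} : Set ℝ).indicator (fun _ => (1:ℝ)/2) t) μ := h1.add h2
  rw [integral_add h12 h3, integral_add h1 h2,
    integral_indicator_const _ measurableSet_Ioo,
    integral_indicator_const _ (measurableSet_singleton a),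
    integral_indicator_const _ (measurableSet_singleton b)]
  simp [smul_eq_mul, measureReal_def]
  ring

lemma tendsto_main (μ : Measure ℝ) [IsProbabilityMeasure μ] {a b : ℝ} (hab : a < b) :
    Tendsto (fun ε : ℝ =>
        ∫ t, (Real.arctan ((b - t)/ε) - Real.arctan ((a - t)/ε)) / Real.pi ∂μ)
      (nhdsWithin 0 (Set.Ioi 0))
      (nhds ((μ (Set.Ioo a b)).toReal + (μ {a}).toReal / 2 + (μ {b}).toReal / 2)) := by
  rw [← integral_limit μ a b]
  refine tendsto_integral_filter_of_dominated_convergence (fun _ => (1:ℝ))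
    (Eventually.of_forall fun ε => ?_) (Eventually.of_forall fun ε => ?_)
    (integrable_const 1) (Eventually.of_forall fun t => tendsto_F a b hab t)
  · apply Continuous.aestronglyMeasurable
    continuity
  · exact Eventually.of_forall fun t => bound_F a b t ε

lemma part1 (μ : Measure ℝ) [IsProbabilityMeasure μ] {a b : ℝ} (hab : a < b) :
    Tendsto
      (fun ε : ℝ =>
        -(1 / Real.pi) * ∫ x in a..b, (cauchyTransform μ (x + ε * Complex.I)).im)
      (nhdsWithin 0 (Set.Ioi 0))
      (nhds ((μ (Set.Ioo a b)).toReal + (μ {a}).toReal / 2 + (μ {b}).toReal / 2)) := by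
  refine (tendsto_main μ hab).congr' ?_
  filter_upwards [self_mem_nhdsWithin] with ε (hε : (0:ℝ) < ε)
  exact (key_identity μ hab.le hε).symm

lemma countable_atoms (μ : Measure ℝ) [IsFiniteMeasure μ] :
    Set.Countable {x : ℝ | μ {x} ≠ 0} := by
  have h := Measure.countable_meas_pos_of_disjoint_iUnion (μ := μ)
    (As := fun x : ℝ => {x}) (fun x => measurableSet_singleton x)
    (fun i j hij => by simpa [Function.onFun] using hij)
  convert h using 1
  ext x
  simp [pos_iff_ne_zero]

lemma part2 (μ ν : Measure ℝ) [IsProbabilityMeasure μ] [IsProbabilityMeasure ν]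
    (heq : ∀ a b : ℝ, a < b →
      (μ (Set.Ioo a b)).toReal + (μ {a}).toReal / 2 + (μ {b}).toReal / 2 =
      (ν (Set.Ioo a b)).toReal + (ν {a}).toReal / 2 + (ν {b}).toReal / 2) : μ = ν := by
  set D : Set ℝ := {x : ℝ | μ {x} ≠ 0} ∪ {x : ℝ | ν {x} ≠ 0} with hD
  have hDc : D.Countable := (countable_atoms μ).union (countable_atoms ν)
  have hdense : Dense Dᶜ := hDc.dense_compl ℝ
  -- agreement on Ioo with endpoints outside D
  have hIoo : ∀ l ∈ Dᶜ, ∀ u ∈ Dᶜ, l < u → μ (Set.Ioc l u) = ν (Set.Ioc l u) := by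
    intro l hl u hu hlu
    have hμl : μ {l} = 0 := by
      by_contra h; exact hl (Or.inl h)
    have hμu : μ {u} = 0 := by
      by_contra h; exact hu (Or.inl h)
    have hνl : ν {l} = 0 := by
      by_contra h; exact hl (Or.inr h)
    have hνu : ν {u} = 0 := by
      by_contra h; exact hu (Or.inr h)
    have h := heq l u hlu
    rw [hμl, hμu, hνl, hνu] at h
    simp only [ENNReal.toReal_zero, zero_div, add_zero] at h
    have hooμν : μ (Set.Ioo l u) = ν (Set.Ioo l u) :=
      (ENNReal.toReal_eq_toReal_iff' (measure_ne_top μ _) (measure_ne_top ν _)).mp h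
    have hcμ : μ (Set.Ioc l u) = μ (Set.Ioo l u) := by
      apply le_antisymm
      · calc μ (Set.Ioc l u) = μ (Set.Ioo l u ∪ {u}) := by rw [Set.Ioo_union_right hlu]
          _ ≤ μ (Set.Ioo l u) + μ {u} := measure_union_le _ _
          _ = μ (Set.Ioo l u) := by rw [hμu, add_zero]
      · exact measure_mono Set.Ioo_subset_Ioc_self
    have hcν : ν (Set.Ioc l u) = ν (Set.Ioo l u) := by
      apply le_antisymm
      · calc ν (Set.Ioc l u) = ν (Set.Ioo l u ∪ {u}) := by rw [Set.Ioo_union_right hlu]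
          _ ≤ ν (Set.Ioo l u) + ν {u} := measure_union_le _ _
          _ = ν (Set.Ioo l u) := by rw [hνu, add_zero]
      · exact measure_mono Set.Ioo_subset_Ioc_self
    rw [hcμ, hcν, hooμν]
  -- the generating π-system
  set C : Set (Set ℝ) := { S : Set ℝ | ∃ l ∈ Dᶜ, ∃ u ∈ Dᶜ, l < u ∧ Set.Ioc l u = S } with hC
  have hgen : (inferInstance : MeasurableSpace ℝ) = MeasurableSpace.generateFrom C := by
    rw [BorelSpace.measurable_eq (α := ℝ)]
    exact hdense.borel_eq_generateFrom_Ioc_mem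
  have hpi : IsPiSystem C := by
    rintro s ⟨l, hl, u, hu, hlu, rfl⟩ t ⟨l', hl', u', hu', hl'u', rfl⟩ hne
    rw [Set.Ioc_inter_Ioc] at hne ⊢
    refine ⟨max l l', ?_, min u u', ?_, ?_, rfl⟩
    · rcases le_total l l' with h | h
      · rwa [max_eq_right h]
      · rwa [max_eq_left h]
    · rcases le_total u u' with h | h
      · rwa [min_eq_left h]
      · rwa [min_eq_right h]
    · exact (Set.nonempty_Ioc).mp hne
  refine MeasureTheory.ext_of_generate_finite C hgen hpi ?_ (by simp)
  rintro s ⟨l, hl, u, hu, hlu, rfl⟩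
  exact hIoo l hl u hu hlu

/-- The Stieltjes inversion formula: for a probability measure `μ` on `ℝ` and reals
`a < b`, `lim_{ε↓0} −(1/π) ∫_a^b Im G_μ(x+iε) dx = μ((a,b)) + μ({a})/2 + μ({b})/2`.
In particular two probability measures with the same Cauchy transform on the upper
half-plane coincide. -/
theorem stieltjes_inversion (μ : Measure ℝ) [IsProbabilityMeasure μ] :
    (∀ a b : ℝ, a < b →
      Tendsto
        (fun ε : ℝ =>
          -(1 / Real.pi) * ∫ x in a..b, (cauchyTransform μ (x + ε * Complex.I)).im)
        (nhdsWithin 0 (Set.Ioi 0))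
        (nhds ((μ (Set.Ioo a b)).toReal + (μ {a}).toReal / 2 + (μ {b}).toReal / 2))) ∧
    (∀ ν : Measure ℝ, IsProbabilityMeasure ν →
      (∀ z : ℂ, 0 < z.im → cauchyTransform μ z = cauchyTransform ν z) → μ = ν) := by
  constructor
  · intro a b hab
    exact part1 μ hab
  · intro ν hν hG
    refine part2 μ ν fun a b hab => ?_
    have h1 := part1 μ hab
    have h2 := part1 ν hab
    have hfeq : (fun ε : ℝ =>
          -(1 / Real.pi) * ∫ x in a..b, (cauchyTransform ν (x + ε * Complex.I)).im)
        =ᶠ[nhdsWithin 0 (Set.Ioi 0)]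
        (fun ε : ℝ =>
          -(1 / Real.pi) * ∫ x in a..b, (cauchyTransform μ (x + ε * Complex.I)).im) := by
      filter_upwards [self_mem_nhdsWithin] with ε (hε : (0:ℝ) < ε)
      congr 1
      apply intervalIntegral.integral_congr
      intro x _
      show (cauchyTransform ν (↑x + ↑ε * I)).im = (cauchyTransform μ (↑x + ↑ε * I)).im
      rw [hG (↑x + ↑ε * I) (by simpa using hε)]
    exact tendsto_nhds_unique h1 (h2.congr' hfeq)
end

section
/- Let μ be a probability measure on ℝ with μ([−r, r]) = 1 for some r > 0, and let G(z) = ∫_ℝ (z − t)⁻¹ dμ(t), which is well defined on U := {z ∈ ℂ : |z| > 4r}. Then: (a) |G(z)| < 1/(3r) for all z ∈ U; (b) G is injective on U; (c) for every w ∈ ℂ with 0 < |w| < 1/(6r) there exists z ∈ U with G(z) = w. -/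
open MeasureTheory Filter Complex

namespace CTaux

variable {μ : Measure ℝ} [IsProbabilityMeasure μ] {r : ℝ}

lemma ae_mem (hsupp : μ (Set.Icc (-r) r) = 1) : ∀ᵐ t ∂μ, t ∈ Set.Icc (-r) r := by
  rw [ae_iff]
  have h : {t : ℝ | ¬ t ∈ Set.Icc (-r) r} = (Set.Icc (-r) r)ᶜ := rfl
  rw [h, measure_compl measurableSet_Icc (by rw [hsupp]; exact ENNReal.one_ne_top), hsupp,
    measure_univ, tsub_self]

lemma norm_coe_le {t : ℝ} (ht : t ∈ Set.Icc (-r) r) : ‖(t : ℂ)‖ ≤ r := by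
  rw [Complex.norm_real, Real.norm_eq_abs]
  exact abs_le.mpr ⟨ht.1, ht.2⟩

lemma sub_lb {z : ℂ} {t : ℝ} (ht : t ∈ Set.Icc (-r) r) : ‖z‖ - r ≤ ‖z - (t : ℂ)‖ :=
  le_trans (by linarith [norm_coe_le ht]) (norm_sub_norm_le z (t : ℂ))

lemma sub_ne {z : ℂ} (hz : r < ‖z‖) {t : ℝ} (ht : t ∈ Set.Icc (-r) r) : z - (t : ℂ) ≠ 0 := by
  have := sub_lb (z := z) ht
  intro h
  rw [h, norm_zero] at this
  linarith

lemma integrable_of_bdd (hsupp : μ (Set.Icc (-r) r) = 1) {f : ℝ → ℂ}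
    (hf : AEStronglyMeasurable f μ) {C : ℝ}
    (h : ∀ t ∈ Set.Icc (-r) r, ‖f t‖ ≤ C) : Integrable f μ :=
  Integrable.mono' (integrable_const C) hf ((ae_mem hsupp).mono h)

lemma norm_integral_le_of_bdd (hsupp : μ (Set.Icc (-r) r) = 1) {f : ℝ → ℂ} {C : ℝ}
    (h : ∀ t ∈ Set.Icc (-r) r, ‖f t‖ ≤ C) : ‖∫ t, f t ∂μ‖ ≤ C := by
  have := norm_integral_le_of_norm_le_const (μ := μ) (f := f) ((ae_mem hsupp).mono h)
  simpa using this

lemma meas_inv (z : ℂ) : Measurable (fun t : ℝ => (z - (t : ℂ))⁻¹) :=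
  (measurable_const.sub Complex.measurable_ofReal).inv

lemma integrable_inv (hsupp : μ (Set.Icc (-r) r) = 1) {z : ℂ} (hz : r < ‖z‖) :
    Integrable (fun t : ℝ => (z - (t : ℂ))⁻¹) μ := by
  refine integrable_of_bdd hsupp (meas_inv z).aestronglyMeasurable (C := (‖z‖ - r)⁻¹) ?_
  intro t ht
  rw [norm_inv]
  exact inv_anti₀ (by linarith) (sub_lb ht)

lemma integrable_t_inv (hsupp : μ (Set.Icc (-r) r) = 1) (hr : 0 ≤ r) {z : ℂ} (hz : r < ‖z‖) :
    Integrable (fun t : ℝ => (t : ℂ) * (z - (t : ℂ))⁻¹) μ := by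
  refine integrable_of_bdd hsupp
    (Complex.measurable_ofReal.mul (meas_inv z)).aestronglyMeasurable
    (C := r * (‖z‖ - r)⁻¹) ?_
  intro t ht
  rw [norm_mul, norm_inv]
  exact mul_le_mul (norm_coe_le ht) (inv_anti₀ (by linarith) (sub_lb ht))
    (by positivity) hr

lemma meas_prod_inv (z1 z2 : ℂ) :
    Measurable (fun t : ℝ => ((z1 - (t : ℂ)) * (z2 - (t : ℂ)))⁻¹) :=
  ((measurable_const.sub Complex.measurable_ofReal).mul
    (measurable_const.sub Complex.measurable_ofReal)).inv

lemma prod_inv_bound {z1 z2 : ℂ} (h1 : r < ‖z1‖) (h2 : r < ‖z2‖) {t : ℝ}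
    (ht : t ∈ Set.Icc (-r) r) :
    ‖((z1 - (t : ℂ)) * (z2 - (t : ℂ)))⁻¹‖ ≤ ((‖z1‖ - r) * (‖z2‖ - r))⁻¹ := by
  rw [norm_inv, norm_mul]
  apply inv_anti₀ (by nlinarith)
  exact mul_le_mul (sub_lb ht) (sub_lb ht) (by linarith) (by positivity)

lemma integrable_prod_inv (hsupp : μ (Set.Icc (-r) r) = 1) {z1 z2 : ℂ}
    (h1 : r < ‖z1‖) (h2 : r < ‖z2‖) :
    Integrable (fun t : ℝ => ((z1 - (t : ℂ)) * (z2 - (t : ℂ)))⁻¹) μ :=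
  integrable_of_bdd hsupp (meas_prod_inv z1 z2).aestronglyMeasurable
    (fun t ht => prod_inv_bound h1 h2 ht)

lemma integrable_t_prod_inv (hsupp : μ (Set.Icc (-r) r) = 1) (hr : 0 ≤ r) {z1 z2 : ℂ}
    (h1 : r < ‖z1‖) (h2 : r < ‖z2‖) :
    Integrable (fun t : ℝ => (t : ℂ) * ((z1 - (t : ℂ)) * (z2 - (t : ℂ)))⁻¹) μ := by
  refine integrable_of_bdd hsupp
    (Complex.measurable_ofReal.mul (meas_prod_inv z1 z2)).aestronglyMeasurable
    (C := r * ((‖z1‖ - r) * (‖z2‖ - r))⁻¹) ?_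
  intro t ht
  rw [norm_mul]
  exact mul_le_mul (norm_coe_le ht) (prod_inv_bound h1 h2 ht) (by positivity) hr

lemma sub_formula (hsupp : μ (Set.Icc (-r) r) = 1) {z1 z2 : ℂ}
    (h1 : r < ‖z1‖) (h2 : r < ‖z2‖) :
    cauchyTransform μ z1 - cauchyTransform μ z2
      = (z2 - z1) * ∫ t : ℝ, ((z1 - (t : ℂ)) * (z2 - (t : ℂ)))⁻¹ ∂μ := by
  rw [cauchyTransform, cauchyTransform,
    ← integral_sub (integrable_inv hsupp h1) (integrable_inv hsupp h2), ← integral_const_mul]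
  apply integral_congr_ae
  filter_upwards [ae_mem hsupp] with t ht
  have e1 := sub_ne h1 ht
  have e2 := sub_ne h2 ht
  field_simp
  ring

lemma hsub_formula (hsupp : μ (Set.Icc (-r) r) = 1) (hr : 0 ≤ r) {z1 z2 : ℂ}
    (h1 : r < ‖z1‖) (h2 : r < ‖z2‖) :
    (∫ t : ℝ, (t : ℂ) * (z1 - (t : ℂ))⁻¹ ∂μ) - (∫ t : ℝ, (t : ℂ) * (z2 - (t : ℂ))⁻¹ ∂μ)
      = (z2 - z1) * ∫ t : ℝ, (t : ℂ) * ((z1 - (t : ℂ)) * (z2 - (t : ℂ)))⁻¹ ∂μ := by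
  rw [← integral_sub (integrable_t_inv hsupp hr h1) (integrable_t_inv hsupp hr h2),
    ← integral_const_mul]
  apply integral_congr_ae
  filter_upwards [ae_mem hsupp] with t ht
  have e1 := sub_ne h1 ht
  have e2 := sub_ne h2 ht
  field_simp
  ring

lemma zmul (hsupp : μ (Set.Icc (-r) r) = 1) (hr : 0 ≤ r) {z : ℂ} (hz : r < ‖z‖) :
    z * cauchyTransform μ z = 1 + ∫ t : ℝ, (t : ℂ) * (z - (t : ℂ))⁻¹ ∂μ := by
  rw [cauchyTransform, ← integral_const_mul]
  have : ∫ t : ℝ, z * (z - (t : ℂ))⁻¹ ∂μ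
      = ∫ t : ℝ, (1 + (t : ℂ) * (z - (t : ℂ))⁻¹) ∂μ := by
    apply integral_congr_ae
    filter_upwards [ae_mem hsupp] with t ht
    have e1 := sub_ne hz ht
    field_simp
    ring
  rw [this, integral_add (integrable_const 1) (integrable_t_inv hsupp hr hz), integral_const]
  simp

lemma heq_aux (U rr : ℝ) (hU : 0 < U) : U * (rr / ((U / 2) * (U / 2))) = 4 * rr / U := by
  field_simp
  ring

end CTaux


/-- For a probability measure `μ` on `ℝ` with `μ([−r, r]) = 1`, the Cauchy transform `G`
on `U = {|z| > 4r}` satisfies: (a) `|G(z)| < 1/(3r)` on `U`; (b) `G` is injective on `U`;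
(c) every `w` with `0 < |w| < 1/(6r)` is attained by `G` on `U`. -/
theorem cauchyTransform_injective_on_exterior (μ : Measure ℝ) [IsProbabilityMeasure μ]
    (r : ℝ) (hr : 0 < r) (hsupp : μ (Set.Icc (-r) r) = 1) :
    (∀ z : ℂ, 4 * r < ‖z‖ →
      ‖cauchyTransform μ z‖ < 1 / (3 * r)) ∧
    Set.InjOn (cauchyTransform μ) {z : ℂ | 4 * r < ‖z‖} ∧
    (∀ w : ℂ, 0 < ‖w‖ → ‖w‖ < 1 / (6 * r) →
      ∃ z : ℂ, 4 * r < ‖z‖ ∧ cauchyTransform μ z = w) := by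
  refine ⟨?_, ?_, ?_⟩
  · -- part (a)
    intro z hz
    have hzr : r < ‖z‖ := by linarith
    have hb : ‖cauchyTransform μ z‖ ≤ (‖z‖ - r)⁻¹ := by
      refine CTaux.norm_integral_le_of_bdd hsupp ?_
      intro t ht
      rw [norm_inv]
      exact inv_anti₀ (by linarith) (CTaux.sub_lb ht)
    have hlt : (‖z‖ - r)⁻¹ < 1 / (3 * r) := by
      rw [one_div]
      exact inv_strictAnti₀ (by positivity) (by linarith)
    linarith
  · -- part (b)
    intro z1 hz1 z2 hz2 heq
    simp only [Set.mem_setOf_eq] at hz1 hz2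
    have h1 : r < ‖z1‖ := by linarith
    have h2 : r < ‖z2‖ := by linarith
    by_contra hne
    have hI := CTaux.sub_formula hsupp h1 h2 (μ := μ)
    rw [heq, sub_self] at hI
    have hz12 : z2 - z1 ≠ 0 := sub_ne_zero.mpr (fun h => hne h.symm)
    have hI0 : (∫ t : ℝ, ((z1 - (t : ℂ)) * (z2 - (t : ℂ)))⁻¹ ∂μ) = 0 :=
      (mul_eq_zero.mp hI.symm).resolve_left hz12
    -- show the integral is nonzero: |z1 z2 I - 1| < 1
    set I := ∫ t : ℝ, ((z1 - (t : ℂ)) * (z2 - (t : ℂ)))⁻¹ ∂μ with hIdef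
    have hone : (1 : ℂ) = ∫ _ : ℝ, (1 : ℂ) ∂μ := by simp
    have hmul : z1 * z2 * I = ∫ t : ℝ, z1 * z2 * ((z1 - (t : ℂ)) * (z2 - (t : ℂ)))⁻¹ ∂μ :=
      (integral_const_mul _ _).symm
    have hsub : z1 * z2 * I - 1
        = ∫ t : ℝ, (z1 * z2 * ((z1 - (t : ℂ)) * (z2 - (t : ℂ)))⁻¹ - 1) ∂μ := by
      rw [hmul]
      nth_rewrite 1 [hone]
      rw [← integral_sub ((CTaux.integrable_prod_inv hsupp h1 h2).const_mul _)
        (integrable_const 1)]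
    have hM : (0 : ℝ) < (‖z1‖ - r) * (‖z2‖ - r) := by nlinarith
    have key : ‖z1 * z2 * I - 1‖ ≤
        r * (‖z1‖ + ‖z2‖ + r) / ((‖z1‖ - r) * (‖z2‖ - r)) := by
      rw [hsub]
      refine CTaux.norm_integral_le_of_bdd hsupp ?_
      intro t ht
      have e1 := CTaux.sub_ne h1 ht
      have e2 := CTaux.sub_ne h2 ht
      have hrw : z1 * z2 * ((z1 - (t : ℂ)) * (z2 - (t : ℂ)))⁻¹ - 1
          = ((t : ℂ) * (z1 + z2 - (t : ℂ))) * ((z1 - (t : ℂ)) * (z2 - (t : ℂ)))⁻¹ := by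
        field_simp
        ring
      rw [hrw, norm_mul, div_eq_mul_inv]
      have hb1 : ‖(t : ℂ) * (z1 + z2 - (t : ℂ))‖ ≤ r * (‖z1‖ + ‖z2‖ + r) := by
        rw [norm_mul]
        have ht1 : ‖(t : ℂ)‖ ≤ r := CTaux.norm_coe_le ht
        have ht2 : ‖z1 + z2 - (t : ℂ)‖ ≤ ‖z1‖ + ‖z2‖ + r := by
          calc ‖z1 + z2 - (t : ℂ)‖ ≤ ‖z1 + z2‖ + ‖(t : ℂ)‖ := norm_sub_le _ _
            _ ≤ ‖z1‖ + ‖z2‖ + r := by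
                have := norm_add_le z1 z2
                linarith
        exact mul_le_mul ht1 ht2 (norm_nonneg _) (by linarith)
      exact mul_le_mul hb1 (CTaux.prod_inv_bound h1 h2 ht) (norm_nonneg _) (by positivity)
    have hc : r * (‖z1‖ + ‖z2‖ + r) / ((‖z1‖ - r) * (‖z2‖ - r)) < 1 := by
      rw [div_lt_one hM]
      nlinarith
    rw [hI0, mul_zero, zero_sub, norm_neg, norm_one] at key
    linarith
  · -- part (c)
    intro w hw0 hw1
    have hwne : w ≠ 0 := fun h => by simp [h] at hw0
    have h6 : (0 : ℝ) < 6 * r := by positivity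
    have hwlt : ‖w‖ * (6 * r) < 1 := (lt_div_iff₀ h6).mp hw1
    set u := w⁻¹ with hudef
    have hu : 6 * r < ‖u‖ := by
      rw [hudef, norm_inv, inv_eq_one_div, lt_div_iff₀ hw0]
      nlinarith
    have hupos : (0 : ℝ) < ‖u‖ := by linarith
    set D := Metric.closedBall u (‖u‖ / 3) with hDdef
    set h : ℂ → ℂ := fun z => ∫ t : ℝ, (t : ℂ) * (z - (t : ℂ))⁻¹ ∂μ with hhdef
    set Φ : ℂ → ℂ := fun z => u * (1 + h z) with hΦdef
    -- basic estimates on D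
    have hmemD : ∀ z ∈ D, 4 * r < ‖z‖ ∧ ‖u‖ / 2 < ‖z‖ - r := by
      intro z hz
      rw [hDdef, Metric.mem_closedBall, dist_eq_norm] at hz
      have h1 : ‖u‖ - ‖z‖ ≤ ‖z - u‖ := by
        have := norm_sub_norm_le u z
        rw [norm_sub_rev] at this
        linarith
      constructor <;> linarith
    have hnormh : ∀ z ∈ D, ‖h z‖ ≤ r / (‖z‖ - r) := by
      intro z hz
      obtain ⟨hz4, hz2⟩ := hmemD z hz
      have hzr : r < ‖z‖ := by linarith
      rw [hhdef, div_eq_mul_inv]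
      refine CTaux.norm_integral_le_of_bdd hsupp ?_
      intro t ht
      rw [norm_mul, norm_inv]
      exact mul_le_mul (CTaux.norm_coe_le ht) (inv_anti₀ (by linarith) (CTaux.sub_lb ht))
        (by positivity) hr.le
    have hnormh3 : ∀ z ∈ D, ‖h z‖ ≤ 1 / 3 := by
      intro z hz
      obtain ⟨hz4, _⟩ := hmemD z hz
      refine le_trans (hnormh z hz) ?_
      rw [div_le_div_iff₀ (by linarith) (by norm_num)]
      linarith
    have hmaps : Set.MapsTo Φ D D := by
      intro z hz
      rw [hDdef, Metric.mem_closedBall, dist_eq_norm]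
      have : Φ z - u = u * h z := by rw [hΦdef]; ring
      rw [this, norm_mul]
      have := hnormh3 z hz
      nlinarith [norm_nonneg (h z)]
    have hlip : LipschitzOnWith (2/3 : NNReal) Φ D := by
      apply LipschitzOnWith.of_dist_le_mul
      intro z1 hz1 z2 hz2
      obtain ⟨hz14, hz12⟩ := hmemD z1 hz1
      obtain ⟨hz24, hz22⟩ := hmemD z2 hz2
      have h1 : r < ‖z1‖ := by linarith
      have h2 : r < ‖z2‖ := by linarith
      have hform := CTaux.hsub_formula hsupp hr.le h1 h2 (μ := μ)
      set J := ∫ t : ℝ, (t : ℂ) * ((z1 - (t : ℂ)) * (z2 - (t : ℂ)))⁻¹ ∂μ with hJdef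
      have hJ : ‖J‖ ≤ r / ((‖z1‖ - r) * (‖z2‖ - r)) := by
        rw [hJdef, div_eq_mul_inv]
        refine CTaux.norm_integral_le_of_bdd hsupp ?_
        intro t ht
        rw [norm_mul]
        exact mul_le_mul (CTaux.norm_coe_le ht) (CTaux.prod_inv_bound h1 h2 ht)
          (norm_nonneg _) hr.le
      have hAB : (‖u‖ / 2) * (‖u‖ / 2) ≤ (‖z1‖ - r) * (‖z2‖ - r) := by nlinarith
      have hJ2 : ‖J‖ ≤ r / ((‖u‖ / 2) * (‖u‖ / 2)) :=
        le_trans hJ (div_le_div_of_nonneg_left hr.le (by positivity) hAB)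
      have hUJ : ‖u‖ * ‖J‖ ≤ 2 / 3 := by
        have heq : ‖u‖ * (r / ((‖u‖ / 2) * (‖u‖ / 2))) = 4 * r / ‖u‖ :=
          CTaux.heq_aux _ _ hupos
        have hle : 4 * r / ‖u‖ ≤ 2 / 3 := by
          rw [div_le_div_iff₀ hupos (by norm_num)]
          linarith
        calc ‖u‖ * ‖J‖ ≤ ‖u‖ * (r / ((‖u‖ / 2) * (‖u‖ / 2))) := by
              exact mul_le_mul_of_nonneg_left hJ2 (le_of_lt hupos)
          _ ≤ 2 / 3 := heq ▸ hle
      have hΦsub : Φ z1 - Φ z2 = u * (h z1 - h z2) := by rw [hΦdef]; ring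
      rw [dist_eq_norm, dist_eq_norm, hΦsub, norm_mul,
        show h z1 - h z2 = (z2 - z1) * J from hform, norm_mul]
      have : ‖z2 - z1‖ = ‖z1 - z2‖ := norm_sub_rev _ _
      have hcoe : ((2/3 : NNReal) : ℝ) = 2/3 := by norm_num
      rw [hcoe]
      calc ‖u‖ * (‖z2 - z1‖ * ‖J‖) = (‖u‖ * ‖J‖) * ‖z1 - z2‖ := by rw [this]; ring
        _ ≤ (2/3 : ℝ) * ‖z1 - z2‖ :=
            mul_le_mul_of_nonneg_right hUJ (norm_nonneg _)
    have hcontr : ContractingWith (2/3 : NNReal) (hmaps.restrict Φ D D) :=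
      ⟨by rw [div_lt_one (by norm_num : (0:NNReal) < 3)]; norm_num,
        hlip.mapsToRestrict hmaps⟩
    have hDcomplete : IsComplete D := Metric.isClosed_closedBall.isComplete
    have huD : u ∈ D := Metric.mem_closedBall_self (by positivity)
    obtain ⟨z, hzD, hfix, -, -⟩ :=
      hcontr.exists_fixedPoint' hDcomplete hmaps huD (edist_ne_top _ _)
    obtain ⟨hz4, _⟩ := hmemD z hzD
    have hzr : r < ‖z‖ := by linarith
    have hzne : z ≠ 0 := by
      intro hz0
      rw [hz0, norm_zero] at hz4
      linarith
    refine ⟨z, hz4, ?_⟩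
    have hzG := CTaux.zmul hsupp hr.le hzr (μ := μ)
    have hfix' : u * (1 + h z) = z := hfix
    have hwu : w * u = 1 := mul_inv_cancel₀ hwne
    have : z * cauchyTransform μ z = z * w := by
      rw [hzG]
      calc (1 : ℂ) + h z = w * u * (1 + h z) := by rw [hwu, one_mul]
        _ = w * (u * (1 + h z)) := by ring
        _ = w * z := by rw [hfix']
        _ = z * w := mul_comm _ _
    exact mul_left_cancel₀ hzne this
end

section
/- Let μ be a probability measure on ℝ with Cauchy transform G_μ, and set F_μ = 1/G_μ on ℂ⁺ (well defined since G_μ(z) ≠ 0 for z ∈ ℂ⁺). Then Im F_μ(z) ≥ Im z for all z ∈ ℂ⁺; and if Im F_μ(z) = Im z for some z ∈ ℂ⁺, then μ is a Dirac measure, i.e. μ = δ_a for some a ∈ ℝ. In particular, if μ is not a Dirac measure, then H_μ := F_μ − id maps ℂ⁺ into ℂ⁺. -/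
open MeasureTheory Filter Complex

/-- A probability measure concentrated at a point is a Dirac measure. -/
lemma eq_dirac_of_ae_eq (μ : Measure ℝ) [IsProbabilityMeasure μ] (a : ℝ)
    (h : ∀ᵐ t ∂μ, t = a) : μ = Measure.dirac a := by
  have h0 : μ {a}ᶜ = 0 := by
    rw [ae_iff] at h
    convert h using 2
    ext; simp
  have h1 : μ {a} = 1 := by
    have := measure_add_measure_compl (μ := μ) (measurableSet_singleton a)
    rw [h0, add_zero, measure_univ] at this
    exact this
  ext s hs
  rw [Measure.dirac_apply' _ hs]
  by_cases ha : a ∈ s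
  · rw [Set.indicator_of_mem ha]
    refine le_antisymm prob_le_one ?_
    calc (1 : ENNReal) = μ {a} := h1.symm
      _ ≤ μ s := measure_mono (Set.singleton_subset_iff.2 ha)
  · rw [Set.indicator_of_notMem ha]
    exact measure_mono_null (Set.subset_compl_singleton_iff.2 ha) h0

lemma cauchy_key (μ : Measure ℝ) [IsProbabilityMeasure μ] (z : ℂ) (hz : 0 < z.im) :
    z.im ≤ ((cauchyTransform μ z)⁻¹).im ∧
      (((cauchyTransform μ z)⁻¹).im = z.im → ∃ a : ℝ, μ = Measure.dirac a) := by
  set f : ℝ → ℂ := fun t => (z - (t : ℂ))⁻¹ with hf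
  have hne : ∀ t : ℝ, z - (t : ℂ) ≠ 0 := by
    intro t h
    have := congrArg Complex.im h
    simp at this
    linarith
  have hcont : Continuous f := by
    exact (continuous_const.sub Complex.continuous_ofReal).inv₀ hne
  have hbound : ∀ t : ℝ, ‖f t‖ ≤ z.im⁻¹ := by
    intro t
    rw [hf, norm_inv]
    have h1 : z.im ≤ ‖z - (t : ℂ)‖ := by
      have := Complex.abs_im_le_norm (z - (t : ℂ))
      simp only [Complex.sub_im, Complex.ofReal_im, sub_zero] at this
      calc z.im ≤ |z.im| := le_abs_self _
        _ ≤ ‖z - (t : ℂ)‖ := this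
    exact inv_anti₀ hz h1
  have hf_int : Integrable f μ :=
    ⟨hcont.aestronglyMeasurable, HasFiniteIntegral.of_bounded (ae_of_all _ hbound)⟩
  set G : ℂ := cauchyTransform μ z with hG
  have hGint : G = ∫ t, f t ∂μ := rfl
  set g : ℝ → ℝ := fun t => Complex.normSq (f t) with hg
  have hg_int : Integrable g μ := by
    refine ⟨(Complex.continuous_normSq.comp hcont).aestronglyMeasurable,
      HasFiniteIntegral.of_bounded (C := z.im⁻¹ * z.im⁻¹) (ae_of_all _ fun t => ?_)⟩
    rw [hg]
    have h1 : Complex.normSq (f t) = ‖f t‖ * ‖f t‖ := by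
      rw [Complex.normSq_eq_norm_sq, sq]
    rw [Real.norm_eq_abs, _root_.abs_of_nonneg (Complex.normSq_nonneg _), h1]
    exact mul_le_mul (hbound t) (hbound t) (norm_nonneg _) (inv_nonneg.2 hz.le)
  set I2 : ℝ := ∫ t, g t ∂μ with hI2
  have hIm : ∀ t : ℝ, (f t).im = -z.im * g t := by
    intro t
    have hns : Complex.normSq (z - (t:ℂ)) ≠ 0 := fun h => hne t (Complex.normSq_eq_zero.1 h)
    show ((z - (t:ℂ))⁻¹).im = -z.im * Complex.normSq ((z - (t:ℂ))⁻¹)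
    rw [Complex.inv_im, Complex.normSq_inv]
    simp only [Complex.sub_im, Complex.ofReal_im, sub_zero]
    field_simp
  have hGim : G.im = -z.im * I2 := by
    have h := integral_im (𝕜 := ℂ) hf_int
    simp only [RCLike.im_to_complex] at h
    rw [hGint, ← h]
    simp_rw [hIm]
    rw [integral_const_mul]
  have hI2pos : 0 < I2 := by
    rw [hI2]
    rw [integral_pos_iff_support_of_nonneg (fun t => Complex.normSq_nonneg _) hg_int]
    have : Function.support g = Set.univ := by
      ext t
      simp only [Function.mem_support, Set.mem_univ, iff_true, hg]
      exact fun h => (inv_ne_zero (hne t)) (Complex.normSq_eq_zero.1 h)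
    rw [this]
    simp
  have hmul_int : Integrable (fun t => (f t * (starRingEnd ℂ) G).re) μ :=
    (hf_int.mul_const _).re
  have hmul : ∫ t, (f t * (starRingEnd ℂ) G).re ∂μ = Complex.normSq G := by
    have h := integral_re (𝕜 := ℂ) (hf_int.mul_const ((starRingEnd ℂ) G))
    simp only [RCLike.re_to_complex] at h
    rw [h, integral_mul_const, ← hGint, Complex.mul_conj]
    simp
  have hkey : ∫ t, Complex.normSq (f t - G) ∂μ = I2 - Complex.normSq G := by
    have hexpand : (fun t => Complex.normSq (f t - G)) =
        fun t => g t + Complex.normSq G - 2 * (f t * (starRingEnd ℂ) G).re := by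
      funext t
      rw [hg, Complex.normSq_sub]
    have h1 : Integrable (fun t => g t + Complex.normSq G) μ := hg_int.add (integrable_const _)
    rw [hexpand, integral_sub h1 (hmul_int.const_mul 2),
      integral_add hg_int (integrable_const _), integral_const_mul, hmul]
    simp only [integral_const, measure_univ, ENNReal.toReal_one, probReal_univ, one_smul, smul_eq_mul, ← hI2]
    ring
  have hcs : Complex.normSq G ≤ I2 := by
    have h0 : 0 ≤ ∫ t, Complex.normSq (f t - G) ∂μ :=
      integral_nonneg fun t => Complex.normSq_nonneg _
    linarith [hkey ▸ h0]
  have hGne : G ≠ 0 := by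
    intro h
    rw [h] at hGim
    simp at hGim
    rcases hGim with h | h
    · linarith
    · linarith
  have hnsq : 0 < Complex.normSq G := Complex.normSq_pos.2 hGne
  have hinv : (G⁻¹).im = z.im * I2 / Complex.normSq G := by
    rw [Complex.inv_im, hGim]
    ring
  constructor
  · show z.im ≤ (G⁻¹).im
    rw [hinv, le_div_iff₀ hnsq]
    nlinarith
  · intro heq
    have heq : (G⁻¹).im = z.im := heq
    rw [hinv] at heq
    have hI2eq : I2 = Complex.normSq G := by
      field_simp at heq
      linarith
    have hzero : ∫ t, Complex.normSq (f t - G) ∂μ = 0 := by rw [hkey]; linarith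
    have hint2 : Integrable (fun t => Complex.normSq (f t - G)) μ := by
      have hexpand : (fun t => Complex.normSq (f t - G)) =
          fun t => g t + Complex.normSq G - 2 * (f t * (starRingEnd ℂ) G).re := by
        funext t
        rw [hg, Complex.normSq_sub]
      rw [hexpand]
      exact (hg_int.add (integrable_const _)).sub (hmul_int.const_mul 2)
    have hae : ∀ᵐ t ∂μ, Complex.normSq (f t - G) = 0 :=
      (integral_eq_zero_iff_of_nonneg (fun t => Complex.normSq_nonneg _) hint2).1 hzero
    refine ⟨(z - G⁻¹).re, eq_dirac_of_ae_eq μ _ ?_⟩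
    filter_upwards [hae] with t ht
    have hfG : f t = G := sub_eq_zero.1 (Complex.normSq_eq_zero.1 ht)
    have : (t : ℂ) = z - G⁻¹ := by
      rw [hf] at hfG
      have := congrArg (·⁻¹) hfG
      simp only [inv_inv] at this
      rw [← this]
      ring
    calc t = (t : ℂ).re := rfl
      _ = (z - G⁻¹).re := by rw [this]

/-- For a probability measure `μ` on `ℝ` with `F_μ = 1/G_μ` one has
`Im F_μ(z) ≥ Im z` on the upper half-plane, with equality somewhere only for Dirac
measures; in particular if `μ` is not a Dirac measure then `H_μ = F_μ − id` maps the
upper half-plane into itself. -/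
theorem imaginary_part_of_reciprocal_cauchyTransform
    (μ : Measure ℝ) [IsProbabilityMeasure μ] :
    (∀ z : ℂ, 0 < z.im → z.im ≤ ((cauchyTransform μ z)⁻¹).im) ∧
    ((∃ z : ℂ, 0 < z.im ∧ ((cauchyTransform μ z)⁻¹).im = z.im) →
      ∃ a : ℝ, μ = Measure.dirac a) ∧
    ((¬ ∃ a : ℝ, μ = Measure.dirac a) →
      ∀ z : ℂ, 0 < z.im → 0 < ((cauchyTransform μ z)⁻¹ - z).im) := by
  refine ⟨fun z hz => (cauchy_key μ z hz).1, fun ⟨z, hz, heq⟩ => (cauchy_key μ z hz).2 heq,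
    fun hnd z hz => ?_⟩
  have h1 := (cauchy_key μ z hz).1
  have h2 := (cauchy_key μ z hz).2
  rw [Complex.sub_im]
  rcases lt_or_eq_of_le h1 with h | h
  · linarith
  · exact absurd (h2 h.symm) hnd
end
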